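/- arXiv:1805.07197 — 6 statements merged into one kernel-verified Lean document; each statement's English description precedes it below -/
import Mathlib

section
/- (Tverberg's theorem.) Let d ≥ 1 and r ≥ 2 be integers and set n = (r-1)(d+1)+1. Given any n points p_1, ..., p_n in ℝ^d, there is a partition of {1,...,n} into r parts A_1, ..., A_r such that the convex hulls conv{p_i : i ∈ A_m}, m = 1,...,r, have a point in common. -/
open Module RealInnerProductSpace

variable {E : Type*} [NormedAddCommGroup E] [InnerProductSpace ℝ E]

lemma tv_segment_norm_lt {z y : E} (h : ⟪z, y⟫ < ‖z‖ ^ 2) :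
    ∃ w ∈ segment ℝ z y, ‖w‖ < ‖z‖ := by
  have hyz : y ≠ z := by
    rintro rfl
    rw [real_inner_self_eq_norm_sq] at h
    exact lt_irrefl _ h
  set a : ℝ := ‖z‖ ^ 2 - ⟪z, y⟫ with ha
  have ha0 : 0 < a := by rw [ha]; linarith
  set b : ℝ := ‖y - z‖ ^ 2 with hb
  have hb0 : 0 < b := by
    have h1 : y - z ≠ 0 := sub_ne_zero.mpr hyz
    have h2 : 0 < ‖y - z‖ := norm_pos_iff.mpr h1
    positivity
  set t : ℝ := min 1 (a / b) with htdef
  have ht0 : 0 < t := lt_min one_pos (div_pos ha0 hb0)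
  have ht1 : t ≤ 1 := min_le_left _ _
  have htb : t * b ≤ a := by
    calc t * b ≤ (a / b) * b := by
          apply mul_le_mul_of_nonneg_right (min_le_right _ _) hb0.le
      _ = a := by field_simp
  refine ⟨z + t • (y - z), ?_, ?_⟩
  · rw [segment_eq_image']
    exact ⟨t, ⟨ht0.le, ht1⟩, rfl⟩
  · have hexp : ‖z + t • (y - z)‖ ^ 2 = ‖z‖ ^ 2 - 2 * t * a + t ^ 2 * b := by
      rw [norm_add_sq_real, real_inner_smul_right, inner_sub_right,
        real_inner_self_eq_norm_sq, norm_smul, Real.norm_eq_abs, abs_of_pos ht0,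
        mul_pow, ha, hb]
      ring
    have hlt : ‖z + t • (y - z)‖ ^ 2 < ‖z‖ ^ 2 := by
      rw [hexp]
      nlinarith [mul_pos ht0 ha0]
    exact lt_of_pow_lt_pow_left₀ 2 (norm_nonneg z) hlt

lemma tv_exists_inner_nonpos {s : Set E} (z : E) (hs : (0 : E) ∈ convexHull ℝ s) :
    ∃ y ∈ s, ⟪z, y⟫ ≤ 0 := by
  by_contra hcon
  push_neg at hcon
  have hlin : IsLinearMap ℝ (fun y : E => ⟪z, y⟫) :=
    ⟨fun x y => inner_add_right z x y, fun c x => real_inner_smul_right z x c⟩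
  have hsub : convexHull ℝ s ⊆ {y : E | (0 : ℝ) < ⟪z, y⟫} :=
    convexHull_min (fun y hy => hcon y hy) (convex_halfSpace_gt hlin 0)
  have := hsub hs
  simp at this

lemma colorful_caratheodory {E : Type*} [NormedAddCommGroup E] [InnerProductSpace ℝ E]
    [FiniteDimensional ℝ E] {N : ℕ} (hdim : Module.finrank ℝ E = N)
    (C : Fin (N + 1) → Finset E)
    (hC : ∀ i, (0 : E) ∈ convexHull ℝ (C i : Set E)) :
    ∃ x : Fin (N + 1) → E, (∀ i, x i ∈ C i) ∧ (0 : E) ∈ convexHull ℝ (Set.range x) := by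
  classical
  have hne : ∀ i, ∃ y, y ∈ C i := by
    intro i
    by_contra h
    push_neg at h
    have h2 : C i = ∅ := Finset.eq_empty_iff_forall_notMem.mpr h
    have h3 := hC i
    rw [h2] at h3
    simpa using h3
  haveI : ∀ i : Fin (N + 1), Nonempty {y : E // y ∈ C i} := fun i =>
    ⟨⟨(hne i).choose, (hne i).choose_spec⟩⟩
  set g : (∀ i : Fin (N + 1), {y : E // y ∈ C i}) → ℝ :=
    fun x => Metric.infDist 0 (convexHull ℝ (Set.range fun i => (x i : E))) with hg
  obtain ⟨x₀, hx₀⟩ := Finite.exists_min g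
  set x : Fin (N + 1) → E := fun i => (x₀ i : E) with hxdef
  set K := convexHull ℝ (Set.range x) with hKdef
  have hKconv : Convex ℝ K := convex_convexHull ℝ _
  have hKcpt : IsCompact K := (Set.finite_range x).isCompact_convexHull ℝ
  have hKne : K.Nonempty := ⟨x 0, subset_convexHull ℝ _ ⟨0, rfl⟩⟩
  obtain ⟨z, hzK, hz⟩ := hKcpt.exists_infDist_eq_dist hKne 0
  refine ⟨x, fun i => (x₀ i).2, ?_⟩
  by_contra h0
  have hz0 : z ≠ 0 := fun h => h0 (h ▸ hzK)
  have hznorm : 0 < ‖z‖ := norm_pos_iff.mpr hz0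
  have hmin : ∀ w ∈ K, ‖z‖ ≤ ‖w‖ := by
    intro w hw
    have h1 : Metric.infDist 0 K ≤ dist 0 w := Metric.infDist_le_dist_of_mem hw
    rw [hz] at h1
    simpa [dist_zero_left] using h1
  have hvar : ∀ w ∈ K, ‖z‖ ^ 2 ≤ ⟪z, w⟫ := by
    intro w hw
    by_contra hlt
    push_neg at hlt
    obtain ⟨u, huseg, hu⟩ := tv_segment_norm_lt hlt
    exact absurd (hmin u (hKconv.segment_subset hzK hw huseg)) (not_le.mpr hu)
  -- representation of z with support in the hyperplane ⟪z, ·⟫ = ‖z‖²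
  set t : Finset E := Finset.univ.image x with htdef
  have htK : (t : Set E) = Set.range x := by
    rw [htdef, Finset.coe_image, Finset.coe_univ, Set.image_univ]
  have hzt : z ∈ convexHull ℝ (t : Set E) := by rwa [htK, ← hKdef]
  rw [Finset.convexHull_eq] at hzt
  obtain ⟨w, hw₀, hw₁, hwz⟩ := hzt
  set s : Finset E := {y ∈ t | w y ≠ 0} with hsdef
  have hzs : z ∈ convexHull ℝ (s : Set E) := by
    rw [Finset.convexHull_eq]
    exact ⟨w, fun y hy => hw₀ y (Finset.mem_of_mem_filter y hy),
      by rw [hsdef, Finset.sum_filter_ne_zero, hw₁],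
      by rw [hsdef, Finset.centerMass_filter_ne_zero, hwz]⟩
  have hsum_z : ∑ y ∈ t, w y • y = z := by
    have h := Finset.centerMass_eq_of_sum_1 t id hw₁
    rw [hwz] at h
    simpa using h.symm
  have hplane : ∀ y ∈ s, ⟪z, y⟫ = ‖z‖ ^ 2 := by
    have hsumz : ∑ y ∈ t, w y * (⟪z, y⟫ - ‖z‖ ^ 2) = 0 := by
      have h1 : ∑ y ∈ t, w y * ⟪z, y⟫ = ‖z‖ ^ 2 := by
        have h2 : ⟪z, ∑ y ∈ t, w y • y⟫ = ∑ y ∈ t, w y * ⟪z, y⟫ := by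
          rw [inner_sum]
          exact Finset.sum_congr rfl fun y _ => real_inner_smul_right z y (w y)
        rw [← h2, hsum_z, real_inner_self_eq_norm_sq]
      simp only [mul_sub, Finset.sum_sub_distrib, h1, ← Finset.sum_mul, hw₁, one_mul, sub_self]
    have hterm : ∀ y ∈ t, 0 ≤ w y * (⟪z, y⟫ - ‖z‖ ^ 2) := by
      intro y hy
      have hyK : y ∈ K := by
        rw [hKdef, ← htK]
        exact subset_convexHull ℝ _ hy
      have := hvar y hyK
      have := hw₀ y hy
      nlinarith
    have hzero := (Finset.sum_eq_zero_iff_of_nonneg hterm).mp hsumz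
    intro y hy
    rw [hsdef, Finset.mem_filter] at hy
    have := hzero y hy.1
    rcases mul_eq_zero.mp this with h | h
    · exact absurd h hy.2
    · linarith [sub_eq_zero.mp h]
  -- Carathéodory: z lies in the hull of an affinely independent subset of s
  rw [convexHull_eq_union] at hzs
  simp only [Set.mem_iUnion, exists_prop] at hzs
  obtain ⟨u, hus, hai, hzu⟩ := hzs
  -- card bound via the hyperplane
  set f : E →ₗ[ℝ] ℝ := innerₗ E z with hfdef
  have hucard : u.card ≤ N := by
    rcases u.eq_empty_or_nonempty with rfl | hune
    · simp
    haveI : Nonempty {y : E // y ∈ u} := ⟨⟨hune.choose, hune.choose_spec⟩⟩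
    have hrange : Set.range (Subtype.val : {y : E // y ∈ u} → E) = (u : Set E) := by
      ext y; simp
    have hvs : vectorSpan ℝ (Set.range (Subtype.val : {y : E // y ∈ u} → E)) ≤ LinearMap.ker f := by
      rw [hrange, vectorSpan_def]
      rw [Submodule.span_le]
      rintro _ ⟨y₁, hy₁, y₂, hy₂, rfl⟩
      have h₁ := hplane y₁ (hus hy₁)
      have h₂ := hplane y₂ (hus hy₂)
      simp only [SetLike.mem_coe, LinearMap.mem_ker, vsub_eq_sub, hfdef, map_sub, innerₗ_apply_apply]
      rw [h₁, h₂, sub_self]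
    have hcard := hai.finrank_vectorSpan_add_one
    rw [Fintype.card_coe] at hcard
    have hmono := Submodule.finrank_mono hvs
    have hfsurj : Function.Surjective f := by
      intro c
      refine ⟨(c / ‖z‖ ^ 2) • z, ?_⟩
      rw [hfdef, innerₗ_apply_apply, real_inner_smul_right, real_inner_self_eq_norm_sq]
      field_simp
    have hrk : Module.finrank ℝ (LinearMap.range f) = 1 := by
      rw [LinearMap.range_eq_top.mpr hfsurj, finrank_top, Module.finrank_self]
    have hsum := f.finrank_range_add_finrank_ker
    rw [hrk, hdim] at hsum
    omega
  -- choose an unused index j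
  have hut : ∀ y ∈ u, ∃ i : Fin (N + 1), x i = y := by
    intro y hy
    have hyt : y ∈ t := Finset.mem_of_mem_filter y (hus hy)
    rw [htdef, Finset.mem_image] at hyt
    obtain ⟨i, _, hi⟩ := hyt
    exact ⟨i, hi⟩
  choose idx hidx using hut
  set I : Finset (Fin (N + 1)) := u.attach.image (fun y => idx y.1 y.2) with hIdef
  have hIcard : I.card < N + 1 := by
    calc I.card ≤ u.attach.card := Finset.card_image_le
      _ = u.card := Finset.card_attach
      _ ≤ N := hucard
      _ < N + 1 := Nat.lt_succ_self _
  have hIne : ∃ j : Fin (N + 1), j ∉ I := by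
    by_contra hcon
    push_neg at hcon
    have : I = Finset.univ := Finset.eq_univ_iff_forall.mpr hcon
    rw [this, Finset.card_univ, Fintype.card_fin] at hIcard
    omega
  obtain ⟨j, hj⟩ := hIne
  obtain ⟨y₀, hy₀C, hy₀z⟩ := tv_exists_inner_nonpos z (hC j)
  set x' : ∀ i : Fin (N + 1), {y : E // y ∈ C i} := Function.update x₀ j ⟨y₀, hy₀C⟩ with hx'def
  set K' := convexHull ℝ (Set.range fun i => (x' i : E)) with hK'def
  have hzK' : z ∈ K' := by
    have huK' : (u : Set E) ⊆ Set.range fun i => (x' i : E) := by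
      intro y hy
      rw [Finset.mem_coe] at hy
      refine ⟨idx y hy, ?_⟩
      have hne : idx y hy ≠ j := by
        intro heq
        exact hj (heq ▸ Finset.mem_image.mpr ⟨⟨y, hy⟩, Finset.mem_attach _ _, rfl⟩)
      show ((Function.update x₀ j ⟨y₀, hy₀C⟩ (idx y hy) : {c : E // c ∈ C (idx y hy)}) : E) = y
      rw [Function.update_of_ne hne]
      exact hidx y hy
    exact convexHull_mono huK' hzu
  have hy₀K' : y₀ ∈ K' := by
    refine subset_convexHull ℝ _ ⟨j, ?_⟩
    show ((Function.update x₀ j ⟨y₀, hy₀C⟩ j : {c : E // c ∈ C j}) : E) = y₀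
    rw [Function.update_self]
  have hlt : ⟪z, y₀⟫ < ‖z‖ ^ 2 := lt_of_le_of_lt hy₀z (by positivity)
  obtain ⟨u', hu'seg, hu'⟩ := tv_segment_norm_lt hlt
  have hu'K' : u' ∈ K' := (convex_convexHull ℝ _).segment_subset hzK' hy₀K' hu'seg
  have hfinal : g x' < g x₀ := by
    have h1 : g x' ≤ ‖u'‖ := by
      have h3 := Metric.infDist_le_dist_of_mem (x := (0 : E)) hu'K'
      rw [dist_zero_left] at h3
      exact h3
    have h2 : g x₀ = ‖z‖ := by
      show Metric.infDist 0 K = ‖z‖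
      rw [hz, dist_zero_left]
    rw [h2]
    exact lt_of_le_of_lt h1 hu'
  exact absurd (hx₀ x') (not_le.mpr hfinal)

set_option maxHeartbeats 1000000 in
/-- Tverberg's theorem. -/
theorem tverberg_aux (d r : ℕ) (hd : 1 ≤ d) (hr : 2 ≤ r)
    (p : Fin ((r - 1) * (d + 1) + 1) → Fin d → ℝ) :
    ∃ A : Fin r → Finset (Fin ((r - 1) * (d + 1) + 1)),
      ((∀ m m', m ≠ m' → Disjoint (A m) (A m')) ∧ ∀ i, ∃ m, i ∈ A m) ∧
      ∃ z : Fin d → ℝ, ∀ m, z ∈ convexHull ℝ (p '' ↑(A m)) := by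
  classical
  have hrpos : (0 : ℝ) < (r : ℝ) := by
    have : 0 < r := by omega
    exact_mod_cast this
  have hrne : (r : ℝ) ≠ 0 := ne_of_gt hrpos
  set E := EuclideanSpace ℝ (Fin (r - 1) × Fin (d + 1)) with hE
  have hdim : Module.finrank ℝ E = (r - 1) * (d + 1) := by
    show Module.finrank ℝ (EuclideanSpace ℝ (Fin (r - 1) × Fin (d + 1))) = (r - 1) * (d + 1)
    rw [finrank_euclideanSpace]
    simp
  -- lifted points
  set q : Fin ((r - 1) * (d + 1) + 1) → Fin (d + 1) → ℝ :=
    fun i k => if h : (k : ℕ) < d then p i ⟨k, h⟩ else 1 with hq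
  -- the vectors v m, summing to zero, any r-1 of them independent
  set v : Fin r → Fin (r - 1) → ℝ := fun m a =>
    (if m = a.castLE (by omega) then (1 : ℝ) else 0) +
    (if m = (⟨r - 1, by omega⟩ : Fin r) then (-1 : ℝ) else 0) with hv
  have hvsum : ∀ a : Fin (r - 1), ∑ m : Fin r, v m a = 0 := by
    intro a
    rw [hv]
    rw [Finset.sum_add_distrib]
    simp
  have hkey : ∀ c : Fin r → ℝ, (∀ a : Fin (r - 1), ∑ m, c m * v m a = 0) →
      ∀ m, c m = c (⟨r - 1, by omega⟩ : Fin r) := by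
    intro c hc m
    have hsum : ∀ a : Fin (r - 1),
        ∑ m', c m' * v m' a = c (a.castLE (by omega)) - c (⟨r - 1, by omega⟩ : Fin r) := by
      intro a
      rw [hv]
      simp only [mul_add, mul_ite, mul_one, mul_neg_one, mul_zero, Finset.sum_add_distrib,
        Finset.sum_ite_eq', Finset.mem_univ, if_true]
      ring
    rcases Nat.lt_or_ge (m : ℕ) (r - 1) with hm | hm
    · have h1 := hc ⟨(m : ℕ), hm⟩
      rw [hsum ⟨(m : ℕ), hm⟩] at h1
      have h2 : ((⟨(m : ℕ), hm⟩ : Fin (r - 1)).castLE (by omega)) = m := by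
        apply Fin.ext; rfl
      rw [h2] at h1
      linarith
    · have hlt := m.isLt
      have : m = (⟨r - 1, by omega⟩ : Fin r) := by apply Fin.ext; simp; omega
      rw [this]
  -- the tensor points and their color classes
  set T : Fin ((r - 1) * (d + 1) + 1) → Fin r → E :=
    fun i m => WithLp.toLp 2 (fun ak : Fin (r - 1) × Fin (d + 1) => v m ak.1 * q i ak.2) with hT
  set C : Fin ((r - 1) * (d + 1) + 1) → Finset E :=
    fun i => Finset.univ.image (T i) with hCdef
  have hC : ∀ i, (0 : E) ∈ convexHull ℝ ((C i : Set E)) := by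
    intro i
    apply mem_convexHull_of_exists_fintype (fun _ : Fin r => (r : ℝ)⁻¹) (T i)
    · intro m; positivity
    · rw [Finset.sum_const, Finset.card_univ, Fintype.card_fin, nsmul_eq_mul]
      field_simp
    · intro m
      exact Finset.mem_coe.mpr (Finset.mem_image_of_mem _ (Finset.mem_univ m))
    · rw [← Finset.smul_sum]
      have hz : ∑ m, T i m = (0 : E) := by
        rw [WithLp.ext_iff]
        funext ak
        rw [WithLp.ofLp_sum, Finset.sum_apply]
        have : ∑ m : Fin r, T i m ak = (∑ m : Fin r, v m ak.1) * q i ak.2 := by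
          rw [Finset.sum_mul]
        rw [this, hvsum, zero_mul]
        rfl
      rw [hz, smul_zero]
  obtain ⟨x, hxC, hx0⟩ := colorful_caratheodory hdim C hC
  -- extract the color assignment
  have hselx : ∀ i, ∃ m : Fin r, T i m = x i := by
    intro i
    have h1 := hxC i
    rw [hCdef] at h1
    simpa [Finset.mem_image] using h1
  choose sel hsel using hselx
  -- extract the weights
  rw [convexHull_range_eq_exists_affineCombination] at hx0
  obtain ⟨s, wt, hwt₀, hwt₁, hwaff⟩ := hx0
  rw [affineCombination_eq_centerMass hwt₁, Finset.centerMass_eq_of_sum_1 _ _ hwt₁] at hwaff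
  set lam : Fin ((r - 1) * (d + 1) + 1) → ℝ := fun i => if i ∈ s then wt i else 0 with hlam
  have hlam₀ : ∀ i, 0 ≤ lam i := by
    intro i
    rw [hlam]
    by_cases h : i ∈ s
    · simp only [h, if_true]; exact hwt₀ i h
    · simp [h]
  have hlam₁ : ∑ i, lam i = 1 := by
    rw [hlam, Finset.sum_ite_mem, Finset.univ_inter, hwt₁]
  have hlamx : ∑ i, lam i • x i = (0 : E) := by
    have h1 : ∀ i, lam i • x i = if i ∈ s then wt i • x i else 0 := by
      intro i
      rw [hlam]
      by_cases h : i ∈ s <;> simp [h]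
    rw [Finset.sum_congr rfl fun i _ => h1 i, Finset.sum_ite_mem, Finset.univ_inter, hwaff]
  -- the partition
  set A : Fin r → Finset (Fin ((r - 1) * (d + 1) + 1)) :=
    fun m => Finset.univ.filter (fun i => sel i = m) with hA
  -- the fiber sums
  set W : Fin r → Fin (d + 1) → ℝ := fun m k => ∑ i ∈ A m, lam i * q i k with hW
  have hfiber : ∀ f : Fin ((r - 1) * (d + 1) + 1) → ℝ,
      ∑ m : Fin r, ∑ i ∈ A m, f i = ∑ i, f i := by
    intro f
    rw [hA]
    exact Finset.sum_fiberwise_of_maps_to (fun i _ => Finset.mem_univ (sel i)) f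
  have hcoord : ∀ (a : Fin (r - 1)) (k : Fin (d + 1)),
      ∑ m : Fin r, W m k * v m a = 0 := by
    intro a k
    have h1 : (∑ i, lam i • x i) (a, k) = 0 := by rw [hlamx]; rfl
    rw [WithLp.ofLp_sum, Finset.sum_apply] at h1
    have h2 : ∀ i, (lam i • x i) (a, k) = lam i * (v (sel i) a * q i k) := by
      intro i
      rw [← hsel i]
      rfl
    rw [Finset.sum_congr rfl fun i _ => h2 i] at h1
    calc ∑ m : Fin r, W m k * v m a
        = ∑ m : Fin r, ∑ i ∈ A m, lam i * (v (sel i) a * q i k) := by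
          apply Finset.sum_congr rfl
          intro m _
          rw [hW, Finset.sum_mul]
          apply Finset.sum_congr rfl
          intro i hi
          have hsm : sel i = m := by
            rw [hA] at hi
            exact (Finset.mem_filter.mp hi).2
          rw [hsm]
          ring
      _ = ∑ i, lam i * (v (sel i) a * q i k) := hfiber _
      _ = 0 := h1
  have hWeq : ∀ (k : Fin (d + 1)) (m : Fin r),
      W m k = W (⟨r - 1, by omega⟩ : Fin r) k := by
    intro k m
    exact hkey (fun m' => W m' k) (fun a => hcoord a k) m
  -- last coordinate gives the weights of each part
  have hqlast : ∀ i, q i (⟨d, by omega⟩ : Fin (d + 1)) = 1 := by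
    intro i
    rw [hq]
    simp
  have hWlast : ∀ m, W m (⟨d, by omega⟩ : Fin (d + 1)) = ∑ i ∈ A m, lam i := by
    intro m
    rw [hW]
    apply Finset.sum_congr rfl
    intro i _
    rw [hqlast i, mul_one]
  have ht : ∀ m, ∑ i ∈ A m, lam i = (r : ℝ)⁻¹ := by
    have hsumW : ∑ m : Fin r, ∑ i ∈ A m, lam i = 1 := by
      rw [hfiber]; exact hlam₁
    intro m
    have hall : ∀ m', ∑ i ∈ A m', lam i = ∑ i ∈ A m, lam i := by
      intro m'
      rw [← hWlast, ← hWlast, hWeq _ m', hWeq _ m]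
    have hrS : (r : ℝ) * (∑ i ∈ A m, lam i) = 1 := by
      rw [← hsumW, Finset.sum_congr rfl fun m' _ => hall m', Finset.sum_const,
        Finset.card_univ, Fintype.card_fin, nsmul_eq_mul]
    rw [inv_eq_one_div, eq_div_iff hrne]
    linear_combination hrS
  -- the common point
  set mr : Fin r := (⟨r - 1, by omega⟩ : Fin r) with hmr
  refine ⟨A, ⟨?_, ?_⟩, fun k => (r : ℝ) * W mr ⟨(k : ℕ), by omega⟩, ?_⟩
  · intro m m' hmm'
    rw [Finset.disjoint_left]
    intro i hi hi'
    rw [hA, Finset.mem_filter] at hi hi'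
    exact hmm' (hi.2 ▸ hi'.2 ▸ rfl)
  · intro i
    exact ⟨sel i, by rw [hA]; simp⟩
  · intro m
    have hsum1 : ∑ i ∈ A m, (r : ℝ) * lam i = 1 := by
      rw [← Finset.mul_sum, ht m]
      field_simp
    have hmem := (A m).centerMass_mem_convexHull (w := fun i => (r : ℝ) * lam i) (z := p)
      (fun i _ => mul_nonneg hrpos.le (hlam₀ i)) (by rw [hsum1]; norm_num)
      (fun i hi => Set.mem_image_of_mem p (Finset.mem_coe.mpr hi))
    rw [Finset.centerMass_eq_of_sum_1 _ _ hsum1] at hmem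
    have hzeq : (fun k : Fin d => (r : ℝ) * W mr ⟨(k : ℕ), by omega⟩)
        = ∑ i ∈ A m, ((r : ℝ) * lam i) • p i := by
      funext k
      rw [Finset.sum_apply]
      have h3 : ∀ i, (((r : ℝ) * lam i) • p i) k = (r : ℝ) * (lam i * p i k) := by
        intro i
        rw [Pi.smul_apply, smul_eq_mul]
        ring
      rw [Finset.sum_congr rfl fun i _ => h3 i, ← Finset.mul_sum]
      congr 1
      rw [← hWeq ⟨(k : ℕ), by omega⟩ m, hW]
      apply Finset.sum_congr rfl
      intro i _
      congr 1
      have hklt : ((⟨(k : ℕ), by omega⟩ : Fin (d + 1)) : ℕ) < d := k.isLt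
      simp only [hq]
      rw [dif_pos hklt]
    rw [hzeq]
    exact hmem


/-- `A 1, ..., A r` is a partition of the index set. -/
def IsPartitionOf {n r : ℕ} (A : Fin r → Finset (Fin n)) : Prop :=
  (∀ m m', m ≠ m' → Disjoint (A m) (A m')) ∧ ∀ i, ∃ m, i ∈ A m

/-- Tverberg's theorem: for `d ≥ 1`, `r ≥ 2` and `n = (r-1)(d+1)+1`, any `n` points
in `ℝ^d` can be partitioned into `r` parts whose convex hulls have a common point. -/
theorem tverberg (d r : ℕ) (hd : 1 ≤ d) (hr : 2 ≤ r)
    (p : Fin ((r - 1) * (d + 1) + 1) → Fin d → ℝ) :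
    ∃ A : Fin r → Finset (Fin ((r - 1) * (d + 1) + 1)), IsPartitionOf A ∧
      ∃ z : Fin d → ℝ, ∀ m, z ∈ convexHull ℝ (p '' ↑(A m)) := by
  obtain ⟨A, hpart, hz⟩ := tverberg_aux d r hd hr p
  exact ⟨A, hpart, hz⟩
end

section
/- If an ordered q-increasing (d+1)-dimensional sequence a of length n ≥ 5 is left-dominant, then for each pair of distinct s,t ∈ {1,...,d} it is not the case that f_a(t,i,j)/f_a(s,j,k) ∈ [1/q, q] for all 1 ≤ i < j < k ≤ n; that is, either f_a(t,i,j)/f_a(s,j,k) > q for all such triples, or f_a(t,i,j)/f_a(s,j,k) < 1/q for all such triples. -/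
/-- A `(d+1)`-dimensional sequence is ordered `q`-increasing: every coordinate
sequence is positive and for every `t` the sequence of ratios of the `(t+1)`-st
to the `t`-th coordinate sequence is `q`-increasing. -/
def OrdQInc (q : ℝ) {d n : ℕ} (a : Fin n → Fin (d + 1) → ℝ) : Prop :=
  (∀ i t, 0 < a i t) ∧
  ∀ t : Fin d, ∀ i : Fin n, ∀ h : (i : ℕ) + 1 < n,
    a ⟨(i : ℕ) + 1, h⟩ t.succ / a ⟨(i : ℕ) + 1, h⟩ t.castSucc >
      q * (a i t.succ / a i t.castSucc)

/-- `fseq a t i j` is the increase `f_a(t,i,j)` of the ratio of the `(t+1)`-st and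
`t`-th coordinate sequences from position `i` to position `j`. -/
noncomputable def fseq {d n : ℕ} (a : Fin n → Fin (d + 1) → ℝ) (t : Fin d) (i j : Fin n) : ℝ :=
  (a j t.succ * a i t.castSucc) / (a j t.castSucc * a i t.succ)

/-- `a` is left-dominant: for each pair of distinct `s,t`, the position of
`f_a(t,i,j)/f_a(s,j,k)` relative to the interval `[1/q, q]` is the same for all
triples `i < j < k`. -/
def LeftDominant (q : ℝ) {d n : ℕ} (a : Fin n → Fin (d + 1) → ℝ) : Prop :=
  ∀ s t : Fin d, s ≠ t →
    (∀ i j k : Fin n, i < j → j < k → fseq a t i j / fseq a s j k < 1 / q) ∨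
    (∀ i j k : Fin n, i < j → j < k → fseq a t i j / fseq a s j k ∈ Set.Icc (1 / q) q) ∨
    (∀ i j k : Fin n, i < j → j < k → q < fseq a t i j / fseq a s j k)

/-- `a` is right-dominant: for each pair of distinct `s,t`, the position of
`f_a(t,j,k)/f_a(s,i,j)` relative to the interval `[1/q, q]` is the same for all
triples `i < j < k`. -/
def RightDominant (q : ℝ) {d n : ℕ} (a : Fin n → Fin (d + 1) → ℝ) : Prop :=
  ∀ s t : Fin d, s ≠ t →
    (∀ i j k : Fin n, i < j → j < k → fseq a t j k / fseq a s i j < 1 / q) ∨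
    (∀ i j k : Fin n, i < j → j < k → fseq a t j k / fseq a s i j ∈ Set.Icc (1 / q) q) ∨
    (∀ i j k : Fin n, i < j → j < k → q < fseq a t j k / fseq a s i j)

/-- For a left-dominant ordered `q`-increasing sequence of length `n ≥ 5`, for each
pair of distinct `s,t` the quotient `f_a(t,i,j)/f_a(s,j,k)` cannot lie in `[1/q,q]`
for all triples: either it exceeds `q` for all `i < j < k` or it is below `1/q`
for all `i < j < k`. -/
theorem left_dominant_dichotomy (q : ℝ) (hq : 1 < q) (d n : ℕ) (hn : 5 ≤ n)
    (a : Fin n → Fin (d + 1) → ℝ) (ha : OrdQInc q a) (hl : LeftDominant q a)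
    (s t : Fin d) (hst : s ≠ t) :
    (∀ i j k : Fin n, i < j → j < k → q < fseq a t i j / fseq a s j k) ∨
    (∀ i j k : Fin n, i < j → j < k → fseq a t i j / fseq a s j k < 1 / q) := by
  obtain ⟨hpos, hstep⟩ := ha
  rcases hl s t hst with h | h | h
  · right; exact h
  · exfalso
    have h1 : (1:ℕ) < n := by omega
    have h2 : (2:ℕ) < n := by omega
    have h3 : (3:ℕ) < n := by omega
    have h4 : (4:ℕ) < n := by omega
    set i0 : Fin n := ⟨0, by omega⟩ with hi0
    set i1 : Fin n := ⟨1, h1⟩ with hi1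
    set i2 : Fin n := ⟨2, h2⟩ with hi2
    set i3 : Fin n := ⟨3, h3⟩ with hi3
    set i4 : Fin n := ⟨4, h4⟩ with hi4
    have h01 : i0 < i1 := by simp [hi0, hi1, Fin.lt_def]
    have h12 : i1 < i2 := by simp [hi1, hi2, Fin.lt_def]
    have h14 : i1 < i4 := by simp [hi1, hi4, Fin.lt_def]
    -- positivity
    have pT0s : 0 < a i0 t.succ := hpos _ _
    have pT0c : 0 < a i0 t.castSucc := hpos _ _
    have pT1s : 0 < a i1 t.succ := hpos _ _
    have pT1c : 0 < a i1 t.castSucc := hpos _ _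
    have pS1s : 0 < a i1 s.succ := hpos _ _
    have pS1c : 0 < a i1 s.castSucc := hpos _ _
    have pS2s : 0 < a i2 s.succ := hpos _ _
    have pS2c : 0 < a i2 s.castSucc := hpos _ _
    have pS3s : 0 < a i3 s.succ := hpos _ _
    have pS3c : 0 < a i3 s.castSucc := hpos _ _
    have pS4s : 0 < a i4 s.succ := hpos _ _
    have pS4c : 0 < a i4 s.castSucc := hpos _ _
    have hq0 : (0:ℝ) < q := by linarith
    -- ratio variables
    set X : ℝ := a i1 t.succ / a i1 t.castSucc / (a i0 t.succ / a i0 t.castSucc) with hX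
    set G1 : ℝ := a i1 s.succ / a i1 s.castSucc with hG1
    set G2 : ℝ := a i2 s.succ / a i2 s.castSucc with hG2
    set G3 : ℝ := a i3 s.succ / a i3 s.castSucc with hG3
    set G4 : ℝ := a i4 s.succ / a i4 s.castSucc with hG4
    have pX : 0 < X := div_pos (div_pos pT1s pT1c) (div_pos pT0s pT0c)
    have pG1 : 0 < G1 := div_pos pS1s pS1c
    have pG2 : 0 < G2 := div_pos pS2s pS2c
    have pG3 : 0 < G3 := div_pos pS3s pS3c
    have pG4 : 0 < G4 := div_pos pS4s pS4c
    -- step inequalities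
    have s23 : q * G2 < G3 := by
      have := hstep s i2 (show (i2 : ℕ) + 1 < n from h3)
      simpa [hG2, hG3, hi2, hi3] using this
    have s34 : q * G3 < G4 := by
      have := hstep s i3 (show (i3 : ℕ) + 1 < n from h4)
      simpa [hG3, hG4, hi3, hi4] using this
    -- fseq rewriting
    have ft : fseq a t i0 i1 = X := by
      rw [fseq, hX]
      field_simp
    have fs12 : fseq a s i1 i2 = G2 / G1 := by
      rw [fseq, hG1, hG2]
      field_simp
    have fs14 : fseq a s i1 i4 = G4 / G1 := by
      rw [fseq, hG1, hG4]
      field_simp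
    have hA := (h i0 i1 i2 h01 h12).2
    have hB := (h i0 i1 i4 h01 h14).1
    rw [ft, fs12] at hA
    rw [ft, fs14] at hB
    -- hA : X / (G2 / G1) ≤ q ; hB : 1/q ≤ X / (G4 / G1)
    have hA' : X * G1 ≤ q * G2 := by
      rw [div_div_eq_mul_div, div_le_iff₀ pG2] at hA
      linarith [hA]
    have hB' : G4 ≤ q * (X * G1) := by
      rw [div_div_eq_mul_div, div_le_div_iff₀ hq0 pG4] at hB
      nlinarith [hB]
    nlinarith [mul_pos hq0 pG2, mul_pos pX pG1, mul_lt_mul_of_pos_left s23 hq0]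
  · left; exact h
end

section
/- Let q > 1 and let a be a dominant ordered q-increasing (d+1)-dimensional sequence of length n > 3. Then: (i) the relation ∼ (defined by t ∼ s iff t = s or t ∼_l s or t ∼_r s) is an equivalence relation on {1,...,d}; (ii) in each equivalence class, either every pair of distinct elements is related by ∼_r or every pair of distinct elements is related by ∼_l; (iii) the relation ≺ is transitive and induces a strict total order on the set of equivalence classes: for any two distinct equivalence classes C, C', either t ≺ s for all t ∈ C and s ∈ C', or s ≺ t for all such pairs. -/
/-- The relation `t ≺ s`: for all `i < j < k`, `q·f_a(t,j,k) < f_a(s,i,j)` and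
`q·f_a(t,i,j) < f_a(s,j,k)`. -/
def Prec (q : ℝ) {d n : ℕ} (a : Fin n → Fin (d + 1) → ℝ) (t s : Fin d) : Prop :=
  t ≠ s ∧ ∀ i j k : Fin n, i < j → j < k →
    q * fseq a t j k < fseq a s i j ∧ q * fseq a t i j < fseq a s j k

/-- The relation `t ∼_l s` (left similar): for all `i < j < k`,
`f_a(t,i,j) > q·f_a(s,j,k)` and `f_a(s,i,j) > q·f_a(t,j,k)`. -/
def SimL (q : ℝ) {d n : ℕ} (a : Fin n → Fin (d + 1) → ℝ) (t s : Fin d) : Prop :=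
  t ≠ s ∧ ∀ i j k : Fin n, i < j → j < k →
    fseq a t i j > q * fseq a s j k ∧ fseq a s i j > q * fseq a t j k

/-- The relation `t ∼_r s` (right similar): for all `i < j < k`,
`f_a(t,j,k) > q·f_a(s,i,j)` and `f_a(s,j,k) > q·f_a(t,i,j)`. -/
def SimR (q : ℝ) {d n : ℕ} (a : Fin n → Fin (d + 1) → ℝ) (t s : Fin d) : Prop :=
  t ≠ s ∧ ∀ i j k : Fin n, i < j → j < k →
    fseq a t j k > q * fseq a s i j ∧ fseq a s j k > q * fseq a t i j

/-- The relation `t ∼ s`: `t = s`, or `t ∼_l s`, or `t ∼_r s`. -/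
def Sim (q : ℝ) {d n : ℕ} (a : Fin n → Fin (d + 1) → ℝ) (t s : Fin d) : Prop :=
  t = s ∨ SimL q a t s ∨ SimR q a t s

section AuxSim

variable {q : ℝ} {d n : ℕ} {a : Fin n → Fin (d + 1) → ℝ}

/-- auxiliary: left-negative relation -/
def LNegA (q : ℝ) {d n : ℕ} (a : Fin n → Fin (d + 1) → ℝ) (t s : Fin d) : Prop :=
  ∀ i j k : Fin n, i < j → j < k → q * fseq a t i j < fseq a s j k

/-- auxiliary: right-negative relation -/
def RNegA (q : ℝ) {d n : ℕ} (a : Fin n → Fin (d + 1) → ℝ) (t s : Fin d) : Prop :=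
  ∀ i j k : Fin n, i < j → j < k → q * fseq a t j k < fseq a s i j

lemma fposA (ha : OrdQInc q a) (t : Fin d) (i j : Fin n) : 0 < fseq a t i j := by
  unfold fseq
  exact div_pos (mul_pos (ha.1 _ _) (ha.1 _ _)) (mul_pos (ha.1 _ _) (ha.1 _ _))

lemma fmulA (ha : OrdQInc q a) (t : Fin d) (i j k : Fin n) :
    fseq a t i k = fseq a t i j * fseq a t j k := by
  unfold fseq
  have h1 := (ha.1 i t.castSucc).ne'
  have h2 := (ha.1 i t.succ).ne'
  have h3 := (ha.1 j t.castSucc).ne'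
  have h4 := (ha.1 j t.succ).ne'
  have h5 := (ha.1 k t.castSucc).ne'
  have h6 := (ha.1 k t.succ).ne'
  field_simp

lemma fgtA (hq : 1 < q) (ha : OrdQInc q a) (t : Fin d) {i j : Fin n} (h : i < j) :
    q < fseq a t i j := by
  have hq0 : (0:ℝ) < q := by linarith
  set r : Fin n → ℝ := fun m => a m t.succ / a m t.castSucc with hr
  have rpos : ∀ m, 0 < r m := fun m => div_pos (ha.1 _ _) (ha.1 _ _)
  have key : ∀ m : ℕ, ∀ hm : m < n, ∀ i : Fin n, (i : ℕ) < m → q * r i < r ⟨m, hm⟩ := by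
    intro m
    induction m with
    | zero => intro hm i hi; exact absurd hi (Nat.not_lt_zero _)
    | succ m ih =>
      intro hm i hi
      have hstep : q * r ⟨m, by omega⟩ < r ⟨m + 1, hm⟩ := by
        have := ha.2 t ⟨m, by omega⟩ (by simpa using hm)
        exact this
      rcases Nat.lt_succ_iff_lt_or_eq.mp hi with h' | h'
      · have h1 := ih (by omega) i h'
        have h2 : r ⟨m, by omega⟩ < q * r ⟨m, by omega⟩ := by
          nlinarith [rpos ⟨m, by omega⟩]
        linarith
      · have : i = ⟨m, by omega⟩ := Fin.ext h'
        rw [this]; linarith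
  have hkey : q * r i < r j := by
    have := key (j : ℕ) j.isLt i h
    simpa using this
  have hfr : fseq a t i j = r j / r i := by
    unfold fseq
    rw [hr]
    simp only []
    have h1 := (ha.1 i t.castSucc).ne'
    have h2 := (ha.1 i t.succ).ne'
    have h3 := (ha.1 j t.castSucc).ne'
    have h4 := (ha.1 j t.succ).ne'
    field_simp
  rw [hfr]
  rw [lt_div_iff₀ (rpos i)]
  linarith [hkey]

end AuxSim
section AuxSim2

variable {q : ℝ} {d n : ℕ} {a : Fin n → Fin (d + 1) → ℝ}

lemma pairLA (hq : 1 < q) (hn : 3 < n) (ha : OrdQInc q a) (hld : LeftDominant q a)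
    {t s : Fin d} (hts : t ≠ s) : LNegA q a t s ∨ RNegA q a s t := by
  have hq0 : (0:ℝ) < q := by linarith
  rcases hld s t hts.symm with h | h | h
  · left
    intro i j k hij hjk
    have hx := h i j k hij hjk
    rw [div_lt_div_iff₀ (fposA ha s j k) hq0] at hx
    linarith
  · exfalso
    set e0 : Fin n := ⟨0, by omega⟩
    set e1 : Fin n := ⟨1, by omega⟩
    set e2 : Fin n := ⟨2, by omega⟩
    set e3 : Fin n := ⟨3, by omega⟩
    have h01 : e0 < e1 := by simp [e0, e1, Fin.lt_def]
    have h12 : e1 < e2 := by simp [e1, e2, Fin.lt_def]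
    have h23 : e2 < e3 := by simp [e2, e3, Fin.lt_def]
    have h13 : e1 < e3 := lt_trans h12 h23
    have h02 : e0 < e2 := lt_trans h01 h12
    have hx1 := (h e0 e1 e3 h01 h13).1  -- 1/q ≤ f t 0 1 / f s 1 3
    have hx2 := (h e0 e2 e3 h02 h23).2  -- f t 0 2 / f s 2 3 ≤ q
    rw [div_le_div_iff₀ hq0 (fposA ha s e1 e3)] at hx1
    rw [div_le_iff₀ (fposA ha s e2 e3)] at hx2
    have hm1 : fseq a s e1 e3 = fseq a s e1 e2 * fseq a s e2 e3 := fmulA ha s e1 e2 e3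
    have hm2 : fseq a t e0 e2 = fseq a t e0 e1 * fseq a t e1 e2 := fmulA ha t e0 e1 e2
    have g1 : q < fseq a t e1 e2 := fgtA hq ha t h12
    have g2 : q < fseq a s e1 e2 := fgtA hq ha s h12
    have p1 := fposA ha t e0 e1
    have p2 := fposA ha s e2 e3
    nlinarith [mul_pos p1 p2, fposA ha t e1 e2]
  · right
    intro i j k hij hjk
    have hx := h i j k hij hjk
    rw [lt_div_iff₀ (fposA ha s j k)] at hx
    linarith

lemma pairRA (hq : 1 < q) (hn : 3 < n) (ha : OrdQInc q a) (hrd : RightDominant q a)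
    {t s : Fin d} (hts : t ≠ s) : RNegA q a t s ∨ LNegA q a s t := by
  have hq0 : (0:ℝ) < q := by linarith
  rcases hrd s t hts.symm with h | h | h
  · left
    intro i j k hij hjk
    have hx := h i j k hij hjk
    rw [div_lt_div_iff₀ (fposA ha s i j) hq0] at hx
    linarith
  · exfalso
    set e0 : Fin n := ⟨0, by omega⟩
    set e1 : Fin n := ⟨1, by omega⟩
    set e2 : Fin n := ⟨2, by omega⟩
    set e3 : Fin n := ⟨3, by omega⟩
    have h01 : e0 < e1 := by simp [e0, e1, Fin.lt_def]
    have h12 : e1 < e2 := by simp [e1, e2, Fin.lt_def]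
    have h23 : e2 < e3 := by simp [e2, e3, Fin.lt_def]
    have h13 : e1 < e3 := lt_trans h12 h23
    have h02 : e0 < e2 := lt_trans h01 h12
    have hx1 := (h e0 e1 e3 h01 h13).2  -- f t 1 3 / f s 0 1 ≤ q
    have hx2 := (h e0 e2 e3 h02 h23).1  -- 1/q ≤ f t 2 3 / f s 0 2
    rw [div_le_iff₀ (fposA ha s e0 e1)] at hx1
    rw [div_le_div_iff₀ hq0 (fposA ha s e0 e2)] at hx2
    have hm1 : fseq a t e1 e3 = fseq a t e1 e2 * fseq a t e2 e3 := fmulA ha t e1 e2 e3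
    have hm2 : fseq a s e0 e2 = fseq a s e0 e1 * fseq a s e1 e2 := fmulA ha s e0 e1 e2
    have g1 : q < fseq a t e1 e2 := fgtA hq ha t h12
    have g2 : q < fseq a s e1 e2 := fgtA hq ha s h12
    have p1 := fposA ha t e2 e3
    have p2 := fposA ha s e0 e1
    nlinarith [mul_pos p1 p2, fposA ha s e1 e2]
  · right
    intro i j k hij hjk
    have hx := h i j k hij hjk
    rw [lt_div_iff₀ (fposA ha s i j)] at hx
    linarith

/-- exclusivity -/
lemma exA (hq : 1 < q) (hn : 3 < n) (ha : OrdQInc q a) {t s : Fin d}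
    (h1 : LNegA q a t s) (h2 : RNegA q a s t) : False := by
  set e0 : Fin n := ⟨0, by omega⟩
  set e1 : Fin n := ⟨1, by omega⟩
  set e2 : Fin n := ⟨2, by omega⟩
  have h01 : e0 < e1 := by simp [e0, e1, Fin.lt_def]
  have h12 : e1 < e2 := by simp [e1, e2, Fin.lt_def]
  have a1 := h1 e0 e1 e2 h01 h12
  have a2 := h2 e0 e1 e2 h01 h12
  nlinarith [fposA ha t e0 e1, fposA ha s e1 e2]

/-- from a single strict instance conclude global LNeg -/
lemma toLNegA (hq : 1 < q) (hn : 3 < n) (ha : OrdQInc q a) (hld : LeftDominant q a)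
    {t s : Fin d} (hts : t ≠ s) {i j k : Fin n} (hij : i < j) (hjk : j < k)
    (h : q * fseq a t i j < fseq a s j k) : LNegA q a t s := by
  rcases pairLA hq hn ha hld hts with hL | hR
  · exact hL
  · exfalso
    have := hR i j k hij hjk
    nlinarith [fposA ha t i j, fposA ha s j k]

lemma toRNegA (hq : 1 < q) (hn : 3 < n) (ha : OrdQInc q a) (hrd : RightDominant q a)
    {t s : Fin d} (hts : t ≠ s) {i j k : Fin n} (hij : i < j) (hjk : j < k)
    (h : q * fseq a t j k < fseq a s i j) : RNegA q a t s := by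
  rcases pairRA hq hn ha hrd hts with hL | hR
  · exact hL
  · exfalso
    have := hR i j k hij hjk
    nlinarith [fposA ha t j k, fposA ha s i j]

end AuxSim2
section AuxSim3

variable {q : ℝ} {d n : ℕ} {a : Fin n → Fin (d + 1) → ℝ}

lemma simL_iffA {t s : Fin d} :
    SimL q a t s ↔ t ≠ s ∧ RNegA q a s t ∧ RNegA q a t s := by
  constructor
  · rintro ⟨h0, h⟩
    exact ⟨h0, fun i j k hij hjk => (h i j k hij hjk).1,
      fun i j k hij hjk => (h i j k hij hjk).2⟩
  · rintro ⟨h0, h1, h2⟩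
    exact ⟨h0, fun i j k hij hjk => ⟨h1 i j k hij hjk, h2 i j k hij hjk⟩⟩

lemma simR_iffA {t s : Fin d} :
    SimR q a t s ↔ t ≠ s ∧ LNegA q a s t ∧ LNegA q a t s := by
  constructor
  · rintro ⟨h0, h⟩
    exact ⟨h0, fun i j k hij hjk => (h i j k hij hjk).1,
      fun i j k hij hjk => (h i j k hij hjk).2⟩
  · rintro ⟨h0, h1, h2⟩
    exact ⟨h0, fun i j k hij hjk => ⟨h1 i j k hij hjk, h2 i j k hij hjk⟩⟩

lemma prec_iffA {t s : Fin d} :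
    Prec q a t s ↔ t ≠ s ∧ RNegA q a t s ∧ LNegA q a t s := by
  constructor
  · rintro ⟨h0, h⟩
    exact ⟨h0, fun i j k hij hjk => (h i j k hij hjk).1,
      fun i j k hij hjk => (h i j k hij hjk).2⟩
  · rintro ⟨h0, h1, h2⟩
    exact ⟨h0, fun i j k hij hjk => ⟨h1 i j k hij hjk, h2 i j k hij hjk⟩⟩

lemma compLA (hq : 1 < q) (hn : 3 < n) (ha : OrdQInc q a) (hld : LeftDominant q a)
    {t s u : Fin d} (h1 : LNegA q a t s) (h2 : LNegA q a s u) (htu : t ≠ u) :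
    LNegA q a t u := by
  set e0 : Fin n := ⟨0, by omega⟩
  set e1 : Fin n := ⟨1, by omega⟩
  set e2 : Fin n := ⟨2, by omega⟩
  set e3 : Fin n := ⟨3, by omega⟩
  have h01 : e0 < e1 := by simp [e0, e1, Fin.lt_def]
  have h12 : e1 < e2 := by simp [e1, e2, Fin.lt_def]
  have h23 : e2 < e3 := by simp [e2, e3, Fin.lt_def]
  have h13 : e1 < e3 := lt_trans h12 h23
  have c1 := h1 e0 e1 e2 h01 h12  -- q f(t,0,1) < f(s,1,2)
  have c2 := h2 e1 e2 e3 h12 h23  -- q f(s,1,2) < f(u,2,3)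
  have hm : fseq a u e1 e3 = fseq a u e1 e2 * fseq a u e2 e3 := fmulA ha u e1 e2 e3
  have g1 : q < fseq a u e1 e2 := fgtA hq ha u h12
  have key : q * fseq a t e0 e1 < fseq a u e1 e3 := by
    nlinarith [fposA ha u e2 e3, fposA ha t e0 e1, fposA ha s e1 e2]
  exact toLNegA hq hn ha hld htu h01 h13 key

lemma compRA (hq : 1 < q) (hn : 3 < n) (ha : OrdQInc q a) (hrd : RightDominant q a)
    {t s u : Fin d} (h1 : RNegA q a t s) (h2 : RNegA q a s u) (htu : t ≠ u) :
    RNegA q a t u := by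
  set e0 : Fin n := ⟨0, by omega⟩
  set e1 : Fin n := ⟨1, by omega⟩
  set e2 : Fin n := ⟨2, by omega⟩
  set e3 : Fin n := ⟨3, by omega⟩
  have h01 : e0 < e1 := by simp [e0, e1, Fin.lt_def]
  have h12 : e1 < e2 := by simp [e1, e2, Fin.lt_def]
  have h23 : e2 < e3 := by simp [e2, e3, Fin.lt_def]
  have h02 : e0 < e2 := lt_trans h01 h12
  have c1 := h1 e1 e2 e3 h12 h23  -- q f(t,2,3) < f(s,1,2)
  have c2 := h2 e0 e1 e2 h01 h12  -- q f(s,1,2) < f(u,0,1)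
  have hm : fseq a u e0 e2 = fseq a u e0 e1 * fseq a u e1 e2 := fmulA ha u e0 e1 e2
  have g1 : q < fseq a u e1 e2 := fgtA hq ha u h12
  have key : q * fseq a t e2 e3 < fseq a u e0 e2 := by
    nlinarith [fposA ha u e0 e1, fposA ha t e2 e3, fposA ha s e1 e2]
  exact toRNegA hq hn ha hrd htu h02 h23 key

/-- mixed similarity is impossible -/
lemma mixedA (hq : 1 < q) (hn : 3 < n) (ha : OrdQInc q a)
    {t s u : Fin d} (hL : SimL q a t s) (hR : SimR q a s u) : False := by
  obtain ⟨-, hst, hts⟩ := simL_iffA.mp hL   -- hst : RNegA s t, hts : RNegA t s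
  obtain ⟨-, hus, hsu⟩ := simR_iffA.mp hR   -- hus : LNegA u s, hsu : LNegA s u
  set e0 : Fin n := ⟨0, by omega⟩
  set e1 : Fin n := ⟨1, by omega⟩
  set e2 : Fin n := ⟨2, by omega⟩
  set e3 : Fin n := ⟨3, by omega⟩
  have h01 : e0 < e1 := by simp [e0, e1, Fin.lt_def]
  have h12 : e1 < e2 := by simp [e1, e2, Fin.lt_def]
  have h23 : e2 < e3 := by simp [e2, e3, Fin.lt_def]
  have c1 := hts e0 e1 e2 h01 h12  -- q f(t,1,2) < f(s,0,1)
  have c2 := hst e1 e2 e3 h12 h23  -- q f(s,2,3) < f(t,1,2)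
  have c3 := hus e1 e2 e3 h12 h23  -- q f(u,1,2) < f(s,2,3)
  have c4 := hsu e0 e1 e2 h01 h12  -- q f(s,0,1) < f(u,1,2)
  nlinarith [fposA ha s e0 e1, fposA ha t e1 e2, fposA ha s e2 e3, fposA ha u e1 e2,
    mul_pos (mul_pos (by linarith : (0:ℝ) < q) (by linarith : (0:ℝ) < q)) (fposA ha s e0 e1)]

end AuxSim3
section AuxSim4

variable {q : ℝ} {d n : ℕ} {a : Fin n → Fin (d + 1) → ℝ}

/-- helper: upgrade `q*(x*w) < S` with `q < w` to `q*(q*x) < S`. -/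
lemma stepUpA {q x w S : ℝ} (hq0 : 0 < q) (hx : 0 < x) (hw : q < w)
    (h : q * (x * w) < S) : q * (q * x) < S := by
  nlinarith [mul_pos hq0 hx]

/-- helper: `q²x < y` and `q²y < x` is impossible for positive `x,y`. -/
lemma chainFalseA {q x y : ℝ} (hq : 1 < q) (hx : 0 < x) (hy : 0 < y)
    (h1 : q * (q * x) < y) (h2 : q * (q * y) < x) : False := by
  have hq2 : 1 < q * q := by nlinarith
  nlinarith [h1, h2, hx, hy, hq2]

lemma absorbLA (hq : 1 < q) (hn : 3 < n) (ha : OrdQInc q a)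
    (hld : LeftDominant q a) (hrd : RightDominant q a)
    {t t' s : Fin d} (hP : Prec q a t s) (hS : Sim q a t t') : Prec q a t' s := by
  obtain ⟨hts, hRts, hLts⟩ := prec_iffA.mp hP
  have hq0 : (0:ℝ) < q := by linarith
  have hq2 : (1:ℝ) < q * q := by nlinarith
  set e0 : Fin n := ⟨0, by omega⟩
  set e1 : Fin n := ⟨1, by omega⟩
  set e2 : Fin n := ⟨2, by omega⟩
  set e3 : Fin n := ⟨3, by omega⟩
  have h01 : e0 < e1 := by simp [e0, e1, Fin.lt_def]
  have h12 : e1 < e2 := by simp [e1, e2, Fin.lt_def]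
  have h23 : e2 < e3 := by simp [e2, e3, Fin.lt_def]
  have h02 : e0 < e2 := lt_trans h01 h12
  have h13 : e1 < e3 := lt_trans h12 h23
  rcases hS with rfl | hS | hS
  · exact hP
  · -- SimL t t'
    obtain ⟨htt', hRt't, hRtt'⟩ := simL_iffA.mp hS
    have ht's : t' ≠ s := by
      rintro rfl
      exact exA hq hn ha hLts hRt't
    refine prec_iffA.mpr ⟨ht's, ?_, ?_⟩
    · -- RNegA t' s, direct at (0,2,3)
      have c1 := hRt't e1 e2 e3 h12 h23   -- q f(t',2,3) < f(t,1,2)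
      have c2 := hRts e0 e1 e2 h01 h12    -- q f(t,1,2) < f(s,0,1)
      have hm : fseq a s e0 e2 = fseq a s e0 e1 * fseq a s e1 e2 := fmulA ha s e0 e1 e2
      have g : q < fseq a s e1 e2 := fgtA hq ha s h12
      refine toRNegA hq hn ha hrd ht's h02 h23 ?_
      have u1 : q * fseq a s e0 e1 < fseq a s e0 e2 := by
        nlinarith [fposA ha s e0 e1]
      have w2 : q * (q * fseq a t' e2 e3) < fseq a s e0 e1 := by
        have := mul_lt_mul_of_pos_left c1 hq0
        linarith
      have w3 := mul_lt_mul_of_pos_left w2 hq0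
      nlinarith [w3, u1, hq2, mul_pos hq0 (fposA ha t' e2 e3)]
    · -- LNegA t' s, by refuting RNegA s t'
      rcases pairLA hq hn ha hld ht's with hL | hR
      · exact hL
      · exfalso
        have d1 := hR e1 e2 e3 h12 h23      -- q f(s,2,3) < f(t',1,2)
        have d2 := hRt't e0 e1 e2 h01 h12   -- q f(t',1,2) < f(t,0,1)
        have d3 := hLts e0 e2 e3 h02 h23    -- q f(t,0,2) < f(s,2,3)
        have hm : fseq a t e0 e2 = fseq a t e0 e1 * fseq a t e1 e2 := fmulA ha t e0 e1 e2
        have g : q < fseq a t e1 e2 := fgtA hq ha t h12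
        rw [hm] at d3
        have p1 : q * (q * fseq a t e0 e1) < fseq a s e2 e3 :=
          stepUpA hq0 (fposA ha t e0 e1) g d3
        have p2 : q * (q * fseq a s e2 e3) < fseq a t e0 e1 := by
          have := mul_lt_mul_of_pos_left d1 hq0
          linarith
        exact chainFalseA hq (fposA ha t e0 e1) (fposA ha s e2 e3) p1 p2
  · -- SimR t t'
    obtain ⟨htt', hLt't, hLtt'⟩ := simR_iffA.mp hS
    have ht's : t' ≠ s := by
      rintro rfl
      exact exA hq hn ha hLt't hRts
    refine prec_iffA.mpr ⟨ht's, ?_, ?_⟩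
    · -- RNegA t' s, by refuting LNegA s t'
      rcases pairRA hq hn ha hrd ht's with hL | hR
      · exact hL
      · exfalso
        have d1 := hR e0 e1 e2 h01 h12      -- q f(s,0,1) < f(t',1,2)
        have d2 := hLt't e1 e2 e3 h12 h23   -- q f(t',1,2) < f(t,2,3)
        have d3 := hRts e0 e1 e3 h01 h13    -- q f(t,1,3) < f(s,0,1)
        have hm : fseq a t e1 e3 = fseq a t e2 e3 * fseq a t e1 e2 := by
          rw [fmulA ha t e1 e2 e3]; ring
        have g : q < fseq a t e1 e2 := fgtA hq ha t h12
        rw [hm] at d3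
        have p1 : q * (q * fseq a t e2 e3) < fseq a s e0 e1 :=
          stepUpA hq0 (fposA ha t e2 e3) g d3
        have p2 : q * (q * fseq a s e0 e1) < fseq a t e2 e3 := by
          have := mul_lt_mul_of_pos_left d1 hq0
          linarith
        exact chainFalseA hq (fposA ha t e2 e3) (fposA ha s e0 e1) p1 p2
    · -- LNegA t' s, direct at (0,1,3)
      have c1 := hLt't e0 e1 e2 h01 h12   -- q f(t',0,1) < f(t,1,2)
      have c2 := hLts e1 e2 e3 h12 h23    -- q f(t,1,2) < f(s,2,3)
      have hm : fseq a s e1 e3 = fseq a s e1 e2 * fseq a s e2 e3 := fmulA ha s e1 e2 e3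
      have g : q < fseq a s e1 e2 := fgtA hq ha s h12
      refine toLNegA hq hn ha hld ht's h01 h13 ?_
      have u1 : q * fseq a s e2 e3 < fseq a s e1 e3 := by
        nlinarith [fposA ha s e2 e3]
      have w2 : q * (q * fseq a t' e0 e1) < fseq a s e2 e3 := by
        have := mul_lt_mul_of_pos_left c1 hq0
        linarith
      have w3 := mul_lt_mul_of_pos_left w2 hq0
      nlinarith [w3, u1, hq2, mul_pos hq0 (fposA ha t' e0 e1)]

lemma absorbRA (hq : 1 < q) (hn : 3 < n) (ha : OrdQInc q a)
    (hld : LeftDominant q a) (hrd : RightDominant q a)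
    {t s s' : Fin d} (hP : Prec q a t s) (hS : Sim q a s s') : Prec q a t s' := by
  obtain ⟨hts, hRts, hLts⟩ := prec_iffA.mp hP
  have hq0 : (0:ℝ) < q := by linarith
  have hq2 : (1:ℝ) < q * q := by nlinarith
  set e0 : Fin n := ⟨0, by omega⟩
  set e1 : Fin n := ⟨1, by omega⟩
  set e2 : Fin n := ⟨2, by omega⟩
  set e3 : Fin n := ⟨3, by omega⟩
  have h01 : e0 < e1 := by simp [e0, e1, Fin.lt_def]
  have h12 : e1 < e2 := by simp [e1, e2, Fin.lt_def]
  have h23 : e2 < e3 := by simp [e2, e3, Fin.lt_def]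
  have h02 : e0 < e2 := lt_trans h01 h12
  have h13 : e1 < e3 := lt_trans h12 h23
  rcases hS with rfl | hS | hS
  · exact hP
  · -- SimL s s'
    obtain ⟨hss', hRs's, hRss'⟩ := simL_iffA.mp hS
    have hts' : t ≠ s' := by
      rintro rfl
      exact exA hq hn ha hLts hRss'
    refine prec_iffA.mpr ⟨hts', ?_, ?_⟩
    · -- RNegA t s', direct at (0,1,3)
      have c1 := hRss' e0 e1 e3 h01 h13   -- q f(s,1,3) < f(s',0,1)
      have c2 := hRts e1 e2 e3 h12 h23    -- q f(t,2,3) < f(s,1,2)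
      have c3 := hLts e1 e2 e3 h12 h23    -- q f(t,1,2) < f(s,2,3)
      have hm1 : fseq a s e1 e3 = fseq a s e1 e2 * fseq a s e2 e3 := fmulA ha s e1 e2 e3
      have hm2 : fseq a t e1 e3 = fseq a t e1 e2 * fseq a t e2 e3 := fmulA ha t e1 e2 e3
      refine toRNegA hq hn ha hrd hts' h01 h13 ?_
      have k1 : (q * fseq a t e2 e3) * (q * fseq a t e1 e2) <
          fseq a s e1 e2 * fseq a s e2 e3 :=
        mul_lt_mul'' c2 c3 (le_of_lt (mul_pos hq0 (fposA ha t e2 e3)))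
          (le_of_lt (mul_pos hq0 (fposA ha t e1 e2)))
      have k2 : q * ((q * fseq a t e2 e3) * (q * fseq a t e1 e2)) < fseq a s' e0 e1 := by
        calc q * ((q * fseq a t e2 e3) * (q * fseq a t e1 e2))
            < q * (fseq a s e1 e2 * fseq a s e2 e3) := mul_lt_mul_of_pos_left k1 hq0
          _ = q * fseq a s e1 e3 := by rw [hm1]
          _ < fseq a s' e0 e1 := c1
      rw [hm2]
      nlinarith [k2, hq2, mul_pos hq0 (mul_pos (fposA ha t e1 e2) (fposA ha t e2 e3))]
    · -- LNegA t s', direct at (0,1,2)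
      have c1 := hRss' e1 e2 e3 h12 h23   -- q f(s,2,3) < f(s',1,2)
      have c2 := hLts e0 e2 e3 h02 h23    -- q f(t,0,2) < f(s,2,3)
      have hm : fseq a t e0 e2 = fseq a t e0 e1 * fseq a t e1 e2 := fmulA ha t e0 e1 e2
      have g : q < fseq a t e1 e2 := fgtA hq ha t h12
      refine toLNegA hq hn ha hld hts' h01 h12 ?_
      rw [hm] at c2
      have p : q * (q * fseq a t e0 e1) < fseq a s e2 e3 :=
        stepUpA hq0 (fposA ha t e0 e1) g c2
      nlinarith [c1, p, hq2, mul_pos hq0 (fposA ha t e0 e1)]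
  · -- SimR s s'
    obtain ⟨hss', hLs's, hLss'⟩ := simR_iffA.mp hS
    have hts' : t ≠ s' := by
      rintro rfl
      exact exA (t := s) (s := t) hq hn ha hLss' hRts
    refine prec_iffA.mpr ⟨hts', ?_, ?_⟩
    · -- RNegA t s', direct at (1,2,3)
      have c1 := hLss' e0 e1 e2 h01 h12   -- q f(s,0,1) < f(s',1,2)
      have c2 := hRts e0 e1 e3 h01 h13    -- q f(t,1,3) < f(s,0,1)
      have hm : fseq a t e1 e3 = fseq a t e2 e3 * fseq a t e1 e2 := by
        rw [fmulA ha t e1 e2 e3]; ring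
      have g : q < fseq a t e1 e2 := fgtA hq ha t h12
      refine toRNegA hq hn ha hrd hts' h12 h23 ?_
      rw [hm] at c2
      have p : q * (q * fseq a t e2 e3) < fseq a s e0 e1 :=
        stepUpA hq0 (fposA ha t e2 e3) g c2
      nlinarith [c1, p, hq2, mul_pos hq0 (fposA ha t e2 e3)]
    · -- LNegA t s', direct at (1,2,3)
      have c1 := hLss' e0 e2 e3 h02 h23   -- q f(s,0,2) < f(s',2,3)
      have c2 := hRts e0 e1 e2 h01 h12    -- q f(t,1,2) < f(s,0,1)
      have hm : fseq a s e0 e2 = fseq a s e0 e1 * fseq a s e1 e2 := fmulA ha s e0 e1 e2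
      have g : q < fseq a s e1 e2 := fgtA hq ha s h12
      refine toLNegA hq hn ha hld hts' h12 h23 ?_
      rw [hm] at c1
      have p : q * (q * fseq a s e0 e1) < fseq a s' e2 e3 :=
        stepUpA hq0 (fposA ha s e0 e1) g c1
      nlinarith [c2, p, hq2, mul_pos hq0 (fposA ha s e0 e1), fposA ha t e1 e2]

end AuxSim4

/-- For a dominant ordered `q`-increasing sequence of length `n > 3`:
(i) `∼` is an equivalence relation; (ii) in each equivalence class either all pairs
of distinct elements are right-similar or all are left-similar; (iii) `≺` is
transitive and induces a strict total order on the equivalence classes. -/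
theorem sim_equivalence_prec_total_order (q : ℝ) (hq : 1 < q) (d n : ℕ) (hn : 3 < n)
    (a : Fin n → Fin (d + 1) → ℝ) (ha : OrdQInc q a)
    (hld : LeftDominant q a) (hrd : RightDominant q a) :
    Equivalence (Sim q a) ∧
    (∀ t : Fin d,
      (∀ s u, Sim q a t s → Sim q a t u → s ≠ u → SimR q a s u) ∨
      (∀ s u, Sim q a t s → Sim q a t u → s ≠ u → SimL q a s u)) ∧
    (∀ t s u : Fin d, Prec q a t s → Prec q a s u → Prec q a t u) ∧
    (∀ t s : Fin d, ¬ Sim q a t s →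
      ((∀ t' s', Sim q a t t' → Sim q a s s' → Prec q a t' s') ∨
       (∀ t' s', Sim q a t t' → Sim q a s s' → Prec q a s' t'))) := by
  have symL : ∀ {x y : Fin d}, SimL q a x y → SimL q a y x := by
    rintro x y ⟨h0, h⟩
    exact ⟨h0.symm, fun i j k hij hjk => ⟨(h i j k hij hjk).2, (h i j k hij hjk).1⟩⟩
  have symR : ∀ {x y : Fin d}, SimR q a x y → SimR q a y x := by
    rintro x y ⟨h0, h⟩
    exact ⟨h0.symm, fun i j k hij hjk => ⟨(h i j k hij hjk).2, (h i j k hij hjk).1⟩⟩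
  have symSim : ∀ {x y : Fin d}, Sim q a x y → Sim q a y x := by
    rintro x y (rfl | h | h)
    · exact Or.inl rfl
    · exact Or.inr (Or.inl (symL h))
    · exact Or.inr (Or.inr (symR h))
  have transSim : ∀ {x y z : Fin d}, Sim q a x y → Sim q a y z → Sim q a x z := by
    rintro x y z hxy hyz
    rcases hxy with rfl | hL | hR
    · exact hyz
    · rcases hyz with rfl | hL' | hR'
      · exact Or.inr (Or.inl hL)
      · by_cases hxz : x = z
        · exact Or.inl hxz
        · obtain ⟨hxy', hRyx, hRxy⟩ := simL_iffA.mp hL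
          obtain ⟨hyz', hRzy, hRyz⟩ := simL_iffA.mp hL'
          exact Or.inr (Or.inl (simL_iffA.mpr ⟨hxz,
            compRA hq hn ha hrd hRzy hRyx (Ne.symm hxz),
            compRA hq hn ha hrd hRxy hRyz hxz⟩))
      · exact ((mixedA hq hn ha hL hR')).elim
    · rcases hyz with rfl | hL' | hR'
      · exact Or.inr (Or.inr hR)
      · exact ((mixedA hq hn ha (symL hL') (symR hR))).elim
      · by_cases hxz : x = z
        · exact Or.inl hxz
        · obtain ⟨hxy', hLyx, hLxy⟩ := simR_iffA.mp hR
          obtain ⟨hyz', hLzy, hLyz⟩ := simR_iffA.mp hR'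
          exact Or.inr (Or.inr (simR_iffA.mpr ⟨hxz,
            compLA hq hn ha hld hLzy hLyx (Ne.symm hxz),
            compLA hq hn ha hld hLxy hLyz hxz⟩))
  have hEquiv : Equivalence (Sim q a) := ⟨fun _ => Or.inl rfl, symSim, transSim⟩
  refine ⟨hEquiv, ?_, ?_, ?_⟩
  · -- part (ii)
    intro t
    by_cases hex : ∃ s u, Sim q a t s ∧ Sim q a t u ∧ SimL q a s u
    · right
      intro s u hs hu hsu
      rcases transSim (symSim hs) hu with rfl | hL | hR
      · exact absurd rfl hsu
      · exact hL
      · exfalso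
        obtain ⟨s₀, u₀, hs₀, hu₀, hL₀⟩ := hex
        rcases transSim (symSim hu₀) hs with he | hL' | hR'
        · rw [he] at hL₀; exact mixedA hq hn ha hL₀ hR
        · exact mixedA hq hn ha hL' hR
        · exact mixedA hq hn ha hL₀ hR'
    · left
      intro s u hs hu hsu
      rcases transSim (symSim hs) hu with rfl | hL | hR
      · exact absurd rfl hsu
      · exact absurd ⟨s, u, hs, hu, hL⟩ hex
      · exact hR
  · -- part (iii): transitivity of Prec
    intro t s u hPts hPsu
    obtain ⟨hts, hRts, hLts⟩ := prec_iffA.mp hPts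
    obtain ⟨hsu, hRsu, hLsu⟩ := prec_iffA.mp hPsu
    have htu : t ≠ u := by
      rintro rfl
      exact exA hq hn ha hLts (fun i j k hij hjk => hRsu i j k hij hjk)
    exact prec_iffA.mpr ⟨htu, compRA hq hn ha hrd hRts hRsu htu,
      compLA hq hn ha hld hLts hLsu htu⟩
  · -- part (iii): total order
    intro t s hns
    have hts : t ≠ s := by rintro rfl; exact hns (Or.inl rfl)
    have hL := pairLA hq hn ha hld hts
    have hR := pairRA hq hn ha hrd hts
    rcases hL with hL | hL <;> rcases hR with hR | hR
    · -- LNegA t s ∧ RNegA t s : Prec t s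
      have hP : Prec q a t s := prec_iffA.mpr ⟨hts, hR, hL⟩
      left
      intro t' s' ht' hs'
      exact absorbRA hq hn ha hld hrd (absorbLA hq hn ha hld hrd hP ht') hs'
    · -- LNegA t s ∧ LNegA s t : SimR t s, contradiction
      exact (hns (Or.inr (Or.inr (simR_iffA.mpr ⟨hts, hR, hL⟩)))).elim
    · -- RNegA s t ∧ RNegA t s : SimL t s, contradiction
      exact (hns (Or.inr (Or.inl (simL_iffA.mpr ⟨hts, hL, hR⟩)))).elim
    · -- RNegA s t ∧ LNegA s t : Prec s t
      have hP : Prec q a s t := prec_iffA.mpr ⟨hts.symm, hL, hR⟩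
      right
      intro t' s' ht' hs'
      exact absorbRA hq hn ha hld hrd (absorbLA hq hn ha hld hrd hP hs') ht'
end

section
/- Let q > 1 and let a be a super-dominant (d+1)-dimensional sequence of length n, and let s, t ∈ {1,...,d} with s < t. Let i_s ≤ i_{s+1} ≤ ... ≤ i_t and j_s ≤ j_{s+1} ≤ ... ≤ j_t be indices in {1,...,n}, and let τ be the ⊢-greatest element of {s, s+1, ..., t} (with ⊢ defined from a). If i_τ ≠ j_τ, then Π_{u=s}^{t} f_a(u, i_u, j_u) > q if i_τ < j_τ, and Π_{u=s}^{t} f_a(u, i_u, j_u) < 1/q if i_τ > j_τ. -/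
/-- The relation `t ⊢ s`: `t ≺ s`, or (`t ∼_r s` and `t < s`), or
(`t ∼_l s` and `t > s`). -/
def Vdash (q : ℝ) {d n : ℕ} (a : Fin n → Fin (d + 1) → ℝ) (t s : Fin d) : Prop :=
  Prec q a t s ∨ (SimR q a t s ∧ t < s) ∨ (SimL q a t s ∧ s < t)

/-- `a` is super-dominant: there is a dominant (ordered `q`-increasing, left- and
right-dominant) sequence `b` of length `(d+1)n` such that `a i = b (i(d+1))`
(one-indexed), i.e. `a` consists of every `(d+1)`-st element of `b`. -/
def SuperDominant (q : ℝ) {d n : ℕ} (a : Fin n → Fin (d + 1) → ℝ) : Prop :=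
  ∃ b : Fin ((d + 1) * n) → Fin (d + 1) → ℝ,
    (OrdQInc q b ∧ LeftDominant q b ∧ RightDominant q b) ∧
    ∀ i : Fin n, a i = b ⟨(i : ℕ) * (d + 1) + d, by
      have h : (i : ℕ) + 1 ≤ n := i.isLt
      calc (i : ℕ) * (d + 1) + d < ((i : ℕ) + 1) * (d + 1) := by nlinarith
        _ ≤ n * (d + 1) := Nat.mul_le_mul_right _ h
        _ = (d + 1) * n := Nat.mul_comm _ _⟩

namespace CruxAux

variable {q : ℝ} {d n : ℕ} {b : Fin ((d + 1) * n) → Fin (d + 1) → ℝ}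

/-- The ratio sequence of coordinate `u`, extended by junk value 1. -/
noncomputable def rho (b : Fin ((d + 1) * n) → Fin (d + 1) → ℝ) (u : Fin d) (x : ℕ) : ℝ :=
  if h : x < (d + 1) * n then b ⟨x, h⟩ u.succ / b ⟨x, h⟩ u.castSucc else 1

lemma rho_pos (hpos : ∀ i t, 0 < b i t) (u : Fin d) (x : ℕ) : 0 < rho b u x := by
  unfold rho
  split
  · exact div_pos (hpos _ _) (hpos _ _)
  · norm_num

lemma fseq_pos (hpos : ∀ i t, 0 < b i t) (u : Fin d) (x y : Fin ((d + 1) * n)) :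
    0 < fseq b u x y :=
  div_pos (mul_pos (hpos _ _) (hpos _ _)) (mul_pos (hpos _ _) (hpos _ _))

lemma fseq_eq_rho (hpos : ∀ i t, 0 < b i t) (u : Fin d) (x y : ℕ)
    (hx : x < (d + 1) * n) (hy : y < (d + 1) * n) :
    fseq b u ⟨x, hx⟩ ⟨y, hy⟩ = rho b u y / rho b u x := by
  have h1 := (hpos ⟨x, hx⟩ u.succ).ne'
  have h2 := (hpos ⟨x, hx⟩ u.castSucc).ne'
  have h3 := (hpos ⟨y, hy⟩ u.succ).ne'
  have h4 := (hpos ⟨y, hy⟩ u.castSucc).ne'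
  unfold fseq rho
  rw [dif_pos hx, dif_pos hy]
  field_simp

lemma rho_step (hb : OrdQInc q b) (u : Fin d) (x : ℕ) (h : x + 1 < (d + 1) * n) :
    q * rho b u x < rho b u (x + 1) := by
  have hx : x < (d + 1) * n := by omega
  have := hb.2 u ⟨x, hx⟩ h
  unfold rho
  rw [dif_pos h, dif_pos hx]
  exact this

lemma rho_lt (hq : 1 < q) (hb : OrdQInc q b) (u : Fin d) {x y : ℕ} (hxy : x < y)
    (hy : y < (d + 1) * n) : q * rho b u x < rho b u y := by
  induction y with
  | zero => omega
  | succ y ih =>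
    rcases Nat.lt_or_ge x y with h | h
    · have h1 := ih h (by omega)
      have h2 := rho_step hb u y hy
      have h3 := rho_pos hb.1 u y
      nlinarith
    · have hxy' : x = y := by omega
      subst hxy'
      exact rho_step hb u x hy

lemma rho_mono (hq : 1 < q) (hb : OrdQInc q b) (u : Fin d) {x y : ℕ} (hxy : x ≤ y)
    (hy : y < (d + 1) * n) : rho b u x ≤ rho b u y := by
  rcases Nat.lt_or_ge x y with h | h
  · have h1 := rho_lt hq hb u h hy
    have h2 := rho_pos hb.1 u x
    nlinarith
  · have : x = y := by omega
    subst this; rfl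

/-- Transfer a single strict comparison to all triples, using left dominance. -/
lemma transferL (hq : 1 < q) (hpos : ∀ i t, 0 < b i t) (hbl : LeftDominant q b)
    {u τ : Fin d} (hne : τ ≠ u) {x0 y0 z0 : Fin ((d + 1) * n)} (h01 : x0 < y0) (h12 : y0 < z0)
    (hwit : q * fseq b u x0 y0 < fseq b τ y0 z0) :
    ∀ x y z : Fin ((d + 1) * n), x < y → y < z → q * fseq b u x y < fseq b τ y z := by
  have hq0 : (0:ℝ) < q := by linarith
  rcases hbl τ u hne with h | h | h
  · intro x y z hxy hyz
    have h1 := h x y z hxy hyz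
    have p1 : 0 < fseq b τ y z := fseq_pos hpos τ y z
    rw [div_lt_div_iff₀ p1 hq0] at h1
    linarith
  · exfalso
    have h1 := (h x0 y0 z0 h01 h12).1
    have p1 : 0 < fseq b τ y0 z0 := fseq_pos hpos τ y0 z0
    have h1' := (div_le_div_iff₀ hq0 p1).mp h1
    nlinarith
  · exfalso
    have h1 := h x0 y0 z0 h01 h12
    have p1 : 0 < fseq b τ y0 z0 := fseq_pos hpos τ y0 z0
    have p2 : 0 < fseq b u x0 y0 := fseq_pos hpos u x0 y0
    rw [lt_div_iff₀ p1] at h1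
    nlinarith

/-- Transfer a single strict comparison to all triples, using right dominance. -/
lemma transferR (hq : 1 < q) (hpos : ∀ i t, 0 < b i t) (hbr : RightDominant q b)
    {u τ : Fin d} (hne : τ ≠ u) {x0 y0 z0 : Fin ((d + 1) * n)} (h01 : x0 < y0) (h12 : y0 < z0)
    (hwit : q * fseq b u y0 z0 < fseq b τ x0 y0) :
    ∀ x y z : Fin ((d + 1) * n), x < y → y < z → q * fseq b u y z < fseq b τ x y := by
  have hq0 : (0:ℝ) < q := by linarith
  rcases hbr τ u hne with h | h | h
  · intro x y z hxy hyz
    have h1 := h x y z hxy hyz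
    have p1 : 0 < fseq b τ x y := fseq_pos hpos τ x y
    rw [div_lt_div_iff₀ p1 hq0] at h1
    linarith
  · exfalso
    have h1 := (h x0 y0 z0 h01 h12).1
    have p1 : 0 < fseq b τ x0 y0 := fseq_pos hpos τ x0 y0
    have h1' := (div_le_div_iff₀ hq0 p1).mp h1
    nlinarith
  · exfalso
    have h1 := h x0 y0 z0 h01 h12
    have p1 : 0 < fseq b τ x0 y0 := fseq_pos hpos τ x0 y0
    have p2 : 0 < fseq b u y0 z0 := fseq_pos hpos u y0 z0
    rw [lt_div_iff₀ p1] at h1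
    nlinarith

lemma prod_div_telescope (f : ℕ → ℝ) (hf : ∀ c, f c ≠ 0) (m : ℕ) :
    ∏ c ∈ Finset.range m, (f (c + 1) / f c) = f m / f 0 := by
  induction m with
  | zero => simp [div_self (hf 0)]
  | succ m ih =>
    rw [Finset.prod_range_succ, ih]
    have h0 := hf 0
    have hm := hf m
    field_simp

end CruxAux
namespace CruxAux

set_option maxHeartbeats 1000000 in
theorem crux_aux (q : ℝ) (hq : 1 < q) (d n : ℕ)
    (a : Fin n → Fin (d + 1) → ℝ) (ha : SuperDominant q a)
    (s t : Fin d)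
    (i j : Fin d → Fin n)
    (hmonoi : ∀ u v : Fin d, s ≤ u → u ≤ v → v ≤ t → i u ≤ i v)
    (hmonoj : ∀ u v : Fin d, s ≤ u → u ≤ v → v ≤ t → j u ≤ j v)
    (τ : Fin d) (hτmem : τ ∈ Finset.Icc s t)
    (hτmax : ∀ u ∈ Finset.Icc s t, u ≠ τ → Vdash q a u τ)
    (hlt : i τ < j τ) :
    q < ∏ u ∈ Finset.Icc s t, fseq a u (i u) (j u) := by
  obtain ⟨b, ⟨hb, hbl, hbr⟩, hab⟩ := ha
  have hpos := hb.1
  have hq0 : (0:ℝ) < q := by linarith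
  -- the embedding of indices
  have hφlt : ∀ ii : Fin n, (ii : ℕ) * (d + 1) + d < (d + 1) * n := by
    intro ii
    have h : (ii : ℕ) + 1 ≤ n := ii.isLt
    calc (ii : ℕ) * (d + 1) + d < ((ii : ℕ) + 1) * (d + 1) := by nlinarith
      _ ≤ n * (d + 1) := Nat.mul_le_mul_right _ h
      _ = (d + 1) * n := Nat.mul_comm _ _
  set ψ : Fin n → Fin ((d + 1) * n) := fun ii => ⟨(ii : ℕ) * (d + 1) + d, hφlt ii⟩ with hψ
  have hab' : ∀ ii, a ii = b (ψ ii) := fun ii => hab ii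
  have hψmono : ∀ {x y : Fin n}, x < y → ψ x < ψ y := by
    intro x y hxy
    have h1 : (x : ℕ) < (y : ℕ) := hxy
    have h2 : (x : ℕ) * (d + 1) < (y : ℕ) * (d + 1) :=
      Nat.mul_lt_mul_of_lt_of_le h1 (le_refl _) (Nat.succ_pos d)
    simp only [hψ, Fin.mk_lt_mk]
    exact Nat.add_lt_add_right h2 d
  have hfa : ∀ (u : Fin d) (x y : Fin n), fseq a u x y = fseq b u (ψ x) (ψ y) := by
    intro u x y
    simp only [fseq, hab']
  have hfa' : ∀ (u : Fin d) (x y : Fin n),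
      fseq a u x y = rho b u ((y : ℕ) * (d + 1) + d) / rho b u ((x : ℕ) * (d + 1) + d) := by
    intro u x y
    rw [hfa u x y]
    exact fseq_eq_rho hpos u _ _ (hφlt x) (hφlt y)
  obtain ⟨hsτ, hτt⟩ := Finset.mem_Icc.mp hτmem
  have hsτ' : (s : ℕ) ≤ (τ : ℕ) := hsτ
  have hτt' : (τ : ℕ) ≤ (t : ℕ) := hτt
  have htvd : (t : ℕ) < d := t.isLt
  -- abbreviations
  set X : ℕ := (i τ : ℕ) * (d + 1) + d with hX
  set Y : ℕ := (j τ : ℕ) * (d + 1) + d with hY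
  set m : ℕ := (t : ℕ) - (s : ℕ) + 1 with hm
  have hmd : m ≤ d := by omega
  have hiτjτ : (i τ : ℕ) < (j τ : ℕ) := hlt
  have hXY : X + (d + 1) ≤ Y := by
    have h1 : ((i τ : ℕ) + 1) * (d + 1) ≤ (j τ : ℕ) * (d + 1) :=
      Nat.mul_le_mul_right _ hiτjτ
    rw [hX, hY]
    linarith
  have hYN : Y < (d + 1) * n := hφlt (j τ)
  -- the step assigned to each u
  set H : Fin d → ℝ := fun u => rho b τ (X + ((u : ℕ) - (s : ℕ)) + 1)
    / rho b τ (X + ((u : ℕ) - (s : ℕ))) with hH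
  have hstepN : ∀ u : Fin d, u ∈ Finset.Icc s t →
      X + ((u : ℕ) - (s : ℕ)) + 1 < (d + 1) * n := by
    intro u hu
    obtain ⟨h1, h2⟩ := Finset.mem_Icc.mp hu
    have h2' : (u : ℕ) ≤ (t : ℕ) := h2
    have h3 : (u : ℕ) - (s : ℕ) + 1 ≤ d := by omega
    linarith
  have hHq : ∀ u ∈ Finset.Icc s t, q < H u := by
    intro u hu
    have hst := rho_step hb τ (X + ((u : ℕ) - (s : ℕ))) (hstepN u hu)
    have hp := rho_pos hpos τ (X + ((u : ℕ) - (s : ℕ)))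
    simp only [hH]
    rw [lt_div_iff₀ hp]
    linarith
  have hHpos : ∀ u : Fin d, 0 < H u :=
    fun u => div_pos (rho_pos hpos τ _) (rho_pos hpos τ _)
  -- the key per-element bound
  have hKey : ∀ u ∈ (Finset.Icc s t).erase τ, 1 ≤ fseq a u (i u) (j u) * H u := by
    intro u hu
    obtain ⟨hune, huIcc⟩ := Finset.mem_erase.mp hu
    obtain ⟨hsu, hut⟩ := Finset.mem_Icc.mp huIcc
    have hut' : (u : ℕ) ≤ (t : ℕ) := hut
    have hsu' : (s : ℕ) ≤ (u : ℕ) := hsu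
    set c : ℕ := (u : ℕ) - (s : ℕ) with hc
    have hcm : c + 1 ≤ m := by omega
    have hW1N : X + c + 1 < (d + 1) * n := hstepN u huIcc
    have hHu : q < H u := hHq u huIcc
    have hHup : 0 < H u := hHpos u
    rcases lt_trichotomy (i u) (j u) with hlt' | heq | hgt
    · -- increasing coordinate: both factors exceed q
      have hgood : q < fseq a u (i u) (j u) := by
        rw [hfa']
        have h0 : (i u : ℕ) < (j u : ℕ) := hlt'
        have h1 : (i u : ℕ) * (d + 1) + d < (j u : ℕ) * (d + 1) + d :=
          Nat.add_lt_add_right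
            (Nat.mul_lt_mul_of_lt_of_le h0 (le_refl _) (Nat.succ_pos d)) d
        have h2 := rho_lt hq hb u h1 (hφlt (j u))
        have h3 := rho_pos hpos u ((i u : ℕ) * (d + 1) + d)
        rw [lt_div_iff₀ h3]
        linarith
      nlinarith
    · -- equal indices: the factor is 1
      rw [heq]
      have h0 : fseq a u (j u) (j u) = 1 := by
        rw [hfa']
        exact div_self (rho_pos hpos u _).ne'
      rw [h0, one_mul]
      linarith
    · -- decreasing coordinate: use the dominance comparison with τ
      have hji : (j u : ℕ) < (i u : ℕ) := hgt
      have hV := hτmax u huIcc hune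
      rcases hune.lt_or_gt with huτ | huτ
      · -- u < τ
        have hiu : i u ≤ i τ := hmonoi u τ hsu huτ.le hτt
        have hju : j u ≤ j τ := hmonoj u τ hsu huτ.le hτt
        have hiu' : (i u : ℕ) ≤ (i τ : ℕ) := hiu
        have hA : ∀ x y z : Fin n, x < y → y < z → q * fseq a u x y < fseq a τ y z := by
          rcases hV with ⟨_, hp⟩ | ⟨⟨_, hp⟩, _⟩ | ⟨⟨_, hp⟩, hτu⟩
          · exact fun x y z h1 h2 => (hp x y z h1 h2).2
          · exact fun x y z h1 h2 => (hp x y z h1 h2).2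
          · exact absurd hτu (lt_asymm huτ)
        have hwita : j u < i τ := lt_of_lt_of_le hgt hiu
        have hwit := hA (j u) (i τ) (j τ) hwita hlt
        rw [hfa, hfa] at hwit
        have hB := transferL hq hpos hbl hune.symm (hψmono hwita) (hψmono hlt) hwit
        -- instantiate at (ψ (j u), X + c, X + c + 1)
        have hiuX : (i u : ℕ) * (d + 1) + d ≤ X := by
          rw [hX]
          exact Nat.add_le_add_right (Nat.mul_le_mul_right _ hiu') d
        have hφju : (j u : ℕ) * (d + 1) + d < X + c := by
          have e1 : (j u : ℕ) * (d + 1) < (i u : ℕ) * (d + 1) :=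
            Nat.mul_lt_mul_of_lt_of_le hji (le_refl _) (Nat.succ_pos d)
          have e2 : (0:ℕ) ≤ c := Nat.zero_le c
          linarith
        have h3 := hB ⟨(j u : ℕ) * (d + 1) + d, hφlt (j u)⟩
          ⟨X + c, Nat.lt_of_succ_lt hW1N⟩ ⟨X + c + 1, hW1N⟩
          (Fin.mk_lt_mk.mpr hφju) (Fin.mk_lt_mk.mpr (Nat.lt_succ_self _))
        rw [fseq_eq_rho hpos, fseq_eq_rho hpos] at h3
        have hBC : rho b u ((i u : ℕ) * (d + 1) + d) ≤ rho b u (X + c) := by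
          apply rho_mono hq hb
          · exact le_trans hiuX (Nat.le_add_right _ _)
          · exact Nat.lt_of_succ_lt hW1N
        rw [hfa']
        set A := rho b u ((j u : ℕ) * (d + 1) + d) with hA'
        set B := rho b u ((i u : ℕ) * (d + 1) + d) with hB'
        set C := rho b u (X + c) with hC'
        have hA0 : 0 < A := rho_pos hpos u _
        have hB0 : 0 < B := rho_pos hpos u _
        have hC0 : 0 < C := rho_pos hpos u _
        have h3' : q * C < H u * A := by
          have e : q * C = (q * (C / A)) * A := by field_simp
          rw [e]
          exact mul_lt_mul_of_pos_right h3 hA0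
        rw [div_mul_eq_mul_div, le_div_iff₀ hB0, one_mul]
        have e1 : q * B ≤ q * C := mul_le_mul_of_nonneg_left hBC hq0.le
        have e2 : B ≤ q * B := le_mul_of_one_le_left hB0.le hq.le
        linarith
      · -- τ < u
        have hiu : i τ ≤ i u := hmonoi τ u hsτ huτ.le hut
        have hju : j τ ≤ j u := hmonoj τ u hsτ huτ.le hut
        have hju' : (j τ : ℕ) ≤ (j u : ℕ) := hju
        have hA : ∀ x y z : Fin n, x < y → y < z → q * fseq a u y z < fseq a τ x y := by
          rcases hV with ⟨_, hp⟩ | ⟨⟨_, hp⟩, hτu⟩ | ⟨⟨_, hp⟩, _⟩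
          · exact fun x y z h1 h2 => (hp x y z h1 h2).1
          · exact absurd hτu (lt_asymm huτ)
          · exact fun x y z h1 h2 => (hp x y z h1 h2).2
        have hwita : j τ < i u := lt_of_le_of_lt hju hgt
        have hwit := hA (i τ) (j τ) (i u) hlt hwita
        rw [hfa, hfa] at hwit
        have hB := transferR hq hpos hbr hune.symm (hψmono hlt) (hψmono hwita) hwit
        -- instantiate at (X + c, X + c + 1, ψ (i u))
        have hYju : Y ≤ (j u : ℕ) * (d + 1) + d := by
          rw [hY]
          exact Nat.add_le_add_right (Nat.mul_le_mul_right _ hju') d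
        have hφiu : X + c + 1 < (i u : ℕ) * (d + 1) + d := by
          have e1 : ((j τ : ℕ) + 1) * (d + 1) ≤ (i u : ℕ) * (d + 1) :=
            Nat.mul_le_mul_right _ hwita
          have e3 : Y + (d + 1) ≤ (i u : ℕ) * (d + 1) + d := by
            rw [hY]; linarith
          linarith
        have h3 := hB ⟨X + c, Nat.lt_of_succ_lt hW1N⟩ ⟨X + c + 1, hW1N⟩
          ⟨(i u : ℕ) * (d + 1) + d, hφlt (i u)⟩
          (Fin.mk_lt_mk.mpr (Nat.lt_succ_self _)) (Fin.mk_lt_mk.mpr hφiu)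
        rw [fseq_eq_rho hpos, fseq_eq_rho hpos] at h3
        have hDA : rho b u (X + c + 1) ≤ rho b u ((j u : ℕ) * (d + 1) + d) := by
          apply rho_mono hq hb
          · linarith
          · exact hφlt (j u)
        rw [hfa']
        set A := rho b u ((j u : ℕ) * (d + 1) + d) with hA'
        set B := rho b u ((i u : ℕ) * (d + 1) + d) with hB'
        set D := rho b u (X + c + 1) with hD'
        have hA0 : 0 < A := rho_pos hpos u _
        have hB0 : 0 < B := rho_pos hpos u _
        have hD0 : 0 < D := rho_pos hpos u _
        have h3' : q * B < H u * D := by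
          have e : q * B = (q * (B / D)) * D := by field_simp
          rw [e]
          exact mul_lt_mul_of_pos_right h3 hD0
        rw [div_mul_eq_mul_div, le_div_iff₀ hB0, one_mul]
        have e1 : H u * D ≤ H u * A := mul_le_mul_of_nonneg_left hDA hHup.le
        have e2 : B ≤ q * B := le_mul_of_one_le_left hB0.le hq.le
        linarith
  -- telescoping product of the steps
  have hTel : ∏ u ∈ Finset.Icc s t, H u = rho b τ (X + m) / rho b τ X := by
    have e1 : ∏ u ∈ Finset.Icc s t, H u
        = ∏ v ∈ Finset.Icc (s : ℕ) (t : ℕ),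
            (rho b τ (X + (v - (s : ℕ)) + 1) / rho b τ (X + (v - (s : ℕ)))) := by
      rw [← Fin.map_valEmbedding_Icc, Finset.prod_map]
      rfl
    rw [e1, ← Finset.Ico_add_one_right_eq_Icc, Finset.prod_Ico_eq_prod_range]
    have e2 : (t : ℕ) + 1 - (s : ℕ) = m := by omega
    rw [e2]
    have e3 : ∀ c ∈ Finset.range m,
        rho b τ (X + ((s : ℕ) + c - (s : ℕ)) + 1) / rho b τ (X + ((s : ℕ) + c - (s : ℕ)))
          = (fun x => rho b τ (X + x)) (c + 1) / (fun x => rho b τ (X + x)) c := by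
      intro c _
      simp only [Nat.add_sub_cancel_left]
      norm_num [Nat.add_assoc]
    rw [Finset.prod_congr rfl e3, prod_div_telescope (fun x => rho b τ (X + x))
      (fun x => (rho_pos hpos τ (X + x)).ne')]
    norm_num
  -- decomposition of the τ factor
  have hXmY : X + m < Y := by linarith
  have hgτ : fseq a τ (i τ) (j τ)
      = (∏ u ∈ Finset.Icc s t, H u) * (rho b τ Y / rho b τ (X + m)) := by
    rw [hfa', hTel]
    show rho b τ Y / rho b τ X = _
    have h1 := (rho_pos hpos τ X).ne'
    have h2 := (rho_pos hpos τ (X + m)).ne'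
    field_simp
  -- assemble
  have hsplit : ∏ u ∈ Finset.Icc s t, fseq a u (i u) (j u)
      = (∏ u ∈ (Finset.Icc s t).erase τ, (fseq a u (i u) (j u) * H u))
        * (H τ * (rho b τ Y / rho b τ (X + m))) := by
    rw [Finset.prod_mul_distrib]
    rw [← Finset.mul_prod_erase _ (fun u => fseq a u (i u) (j u)) hτmem]
    rw [hgτ, ← Finset.mul_prod_erase _ H hτmem]
    ring
  have h1 : 1 ≤ ∏ u ∈ (Finset.Icc s t).erase τ, (fseq a u (i u) (j u) * H u) := by
    rw [← Finset.prod_const_one (s := (Finset.Icc s t).erase τ)]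
    exact Finset.prod_le_prod (fun u _ => zero_le_one) hKey
  have h2 : q < H τ := hHq τ hτmem
  have h3 : q < rho b τ Y / rho b τ (X + m) := by
    have h5 := rho_lt hq hb τ hXmY hYN
    have hp := rho_pos hpos τ (X + m)
    rw [lt_div_iff₀ hp]
    linarith
  have h4 : 0 < H τ * (rho b τ Y / rho b τ (X + m)) :=
    mul_pos (hHpos τ) (div_pos (rho_pos hpos τ _) (rho_pos hpos τ _))
  rw [hsplit]
  have h5 : q * q < H τ * (rho b τ Y / rho b τ (X + m)) := by nlinarith
  have h6 : H τ * (rho b τ Y / rho b τ (X + m))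
      ≤ (∏ u ∈ (Finset.Icc s t).erase τ, (fseq a u (i u) (j u) * H u))
        * (H τ * (rho b τ Y / rho b τ (X + m))) :=
    le_mul_of_one_le_left h4.le h1
  nlinarith

end CruxAux
/-- Corollary of the key lemma for super-dominant sequences: for `s < t`, monotone
families of indices `i_u, j_u` (`s ≤ u ≤ t`), and `τ` the `⊢`-greatest element of
`{s,...,t}` with `i_τ ≠ j_τ`, the product `Π_{u=s}^t f_a(u, i_u, j_u)` exceeds `q`
if `i_τ < j_τ` and is below `1/q` if `i_τ > j_τ`. -/
theorem crux_corollary (q : ℝ) (hq : 1 < q) (d n : ℕ)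
    (a : Fin n → Fin (d + 1) → ℝ) (ha : SuperDominant q a)
    (s t : Fin d) (hst : s < t)
    (i j : Fin d → Fin n)
    (hmonoi : ∀ u v : Fin d, s ≤ u → u ≤ v → v ≤ t → i u ≤ i v)
    (hmonoj : ∀ u v : Fin d, s ≤ u → u ≤ v → v ≤ t → j u ≤ j v)
    (τ : Fin d) (hτmem : τ ∈ Finset.Icc s t)
    (hτmax : ∀ u ∈ Finset.Icc s t, u ≠ τ → Vdash q a u τ)
    (hij : i τ ≠ j τ) :
    (i τ < j τ → q < ∏ u ∈ Finset.Icc s t, fseq a u (i u) (j u)) ∧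
    (j τ < i τ → ∏ u ∈ Finset.Icc s t, fseq a u (i u) (j u) < 1 / q) := by
  constructor
  · intro hlt
    exact CruxAux.crux_aux q hq d n a ha s t i j hmonoi hmonoj τ hτmem hτmax hlt
  · intro hgt
    have hQ := CruxAux.crux_aux q hq d n a ha s t j i hmonoj hmonoi τ hτmem hτmax hgt
    -- positivity of the entries of `a`
    obtain ⟨b, ⟨hb, _, _⟩, hab⟩ := ha
    have hapos : ∀ (x : Fin n) (u : Fin (d + 1)), 0 < a x u := by
      intro x u
      rw [hab x]
      exact hb.1 _ _
    have hmul : (∏ u ∈ Finset.Icc s t, fseq a u (i u) (j u))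
        * (∏ u ∈ Finset.Icc s t, fseq a u (j u) (i u)) = 1 := by
      rw [← Finset.prod_mul_distrib]
      apply Finset.prod_eq_one
      intro u _
      have h1 := (hapos (i u) u.succ).ne'
      have h2 := (hapos (i u) u.castSucc).ne'
      have h3 := (hapos (j u) u.succ).ne'
      have h4 := (hapos (j u) u.castSucc).ne'
      unfold fseq
      field_simp
    have hQ0 : 0 < ∏ u ∈ Finset.Icc s t, fseq a u (j u) (i u) := by linarith
    have hP : ∏ u ∈ Finset.Icc s t, fseq a u (i u) (j u)
        = 1 / ∏ u ∈ Finset.Icc s t, fseq a u (j u) (i u) :=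
      (eq_div_iff hQ0.ne').mpr hmul
    rw [hP]
    exact one_div_lt_one_div_of_lt (by linarith) hQ
end

section
/- Let q > 1, d > 1, and let a be a q-pseudo-geometric d-dimensional sequence of length n ≥ 2. For distinct s,t ∈ {1,...,d} say that t grows faster than s if the sequence (a_i^(t)/a_i^(s))_i is q-increasing. Then 'grows faster' is a strict total order on {1,...,d}: for distinct s,t exactly one of 't grows faster than s', 's grows faster than t' holds, and the relation is transitive. Consequently there is a unique permutation π of {1,...,d} such that the reordered sequence with coordinate sequences a^(π(1)), ..., a^(π(d)) is ordered q-increasing, i.e., for every 1 ≤ t < d the sequence (a_i^(π(t+1))/a_i^(π(t)))_i is q-increasing. -/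
/-- A finite sequence of reals is `q`-increasing: all terms are positive and
each term is more than `q` times the previous one. -/
def QIncr (q : ℝ) {n : ℕ} (b : Fin n → ℝ) : Prop :=
  (∀ i, 0 < b i) ∧ ∀ i : Fin n, ∀ h : (i : ℕ) + 1 < n, b ⟨(i : ℕ) + 1, h⟩ > q * b i

/-- A `d`-dimensional sequence is `q`-pseudo-geometric: every coordinate sequence
is positive and for all distinct coordinates `s ≠ t` one of the two ratio sequences
is `q`-increasing. -/
def PseudoGeom (q : ℝ) {d n : ℕ} (a : Fin n → Fin d → ℝ) : Prop :=
  (∀ i t, 0 < a i t) ∧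
  ∀ s t : Fin d, s ≠ t →
    QIncr q (fun i => a i t / a i s) ∨ QIncr q (fun i => a i s / a i t)

/-- A `d`-dimensional sequence is in general position: any `d` of its terms are
linearly independent. -/
def GenPos {d n : ℕ} (a : Fin n → Fin d → ℝ) : Prop :=
  ∀ g : Fin d → Fin n, Function.Injective g →
    LinearIndependent ℝ (fun k : Fin d => a (g k))

/-- Wrapper around `Fin d`, used to carry an alternative linear order. -/
@[ext]
structure WrapFin (d : ℕ) where
  val : Fin d

/-- The obvious equivalence between `WrapFin d` and `Fin d`. -/
def wrapEquiv (d : ℕ) : WrapFin d ≃ Fin d where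
  toFun := WrapFin.val
  invFun := WrapFin.mk
  left_inv := fun ⟨_⟩ => rfl
  right_inv := fun _ => rfl

instance (d : ℕ) : Fintype (WrapFin d) := Fintype.ofEquiv _ (wrapEquiv d).symm

theorem wrapCard (d : ℕ) : Fintype.card (WrapFin d) = d := by
  rw [Fintype.card_congr (wrapEquiv d), Fintype.card_fin]

/-- For a `q`-pseudo-geometric `d`-dimensional sequence of length `n ≥ 2`, the
relation "`t` grows faster than `s`" (meaning `(a_i^{(t)}/a_i^{(s)})_i` is
`q`-increasing) is a strict total order on the coordinates: for distinct `s, t`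
exactly one of the two directions holds, and the relation is transitive.
Consequently there is a unique permutation `π` of the coordinates such that the
reordered sequence is ordered `q`-increasing, i.e. for every `t` with `t+1 < d`
the sequence `(a_i^{(π(t+1))}/a_i^{(π(t))})_i` is `q`-increasing. -/
theorem grows_faster_total_order (q : ℝ) (hq : 1 < q) (d n : ℕ) (hd : 1 < d)
    (hn : 2 ≤ n) (a : Fin n → Fin d → ℝ) (ha : PseudoGeom q a) :
    (∀ s t : Fin d, s ≠ t →
      Xor' (QIncr q (fun i => a i t / a i s)) (QIncr q (fun i => a i s / a i t))) ∧
    (∀ s t u : Fin d,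
      QIncr q (fun i => a i t / a i s) → QIncr q (fun i => a i s / a i u) →
        QIncr q (fun i => a i t / a i u)) ∧
    (∃! π : Equiv.Perm (Fin d), ∀ (t : ℕ) (h : t + 1 < d),
      QIncr q (fun i => a i (π ⟨t + 1, h⟩) / a i (π ⟨t, Nat.lt_of_succ_lt h⟩))) := by
  obtain ⟨hpos, hpg⟩ := ha
  set R : Fin d → Fin d → Prop := fun s t => QIncr q (fun i => a i t / a i s) with hRdef
  have h0n : (0 : ℕ) + 1 < n := by omega
  have hq0 : 0 < q := lt_trans one_pos hq
  -- asymmetry (includes irreflexivity)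
  have hasymm : ∀ s t, R s t → R t s → False := by
    rintro s t ⟨hb, hb'⟩ ⟨hc, hc'⟩
    have h1 := hb' ⟨0, by omega⟩ h0n
    have h2 := hc' ⟨0, by omega⟩ h0n
    simp only at h1 h2
    set i0 : Fin n := ⟨0, by omega⟩
    set i1 : Fin n := ⟨1, h0n⟩
    have pA := hpos i0 t
    have pB := hpos i0 s
    have pC := hpos i1 t
    have pD := hpos i1 s
    have H := mul_lt_mul'' h1 h2
      (le_of_lt (mul_pos hq0 (div_pos pA pB)))
      (le_of_lt (mul_pos hq0 (div_pos pB pA)))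
    have e1 : (a i1 t / a i1 s) * (a i1 s / a i1 t) = 1 := by
      field_simp
    have e2 : q * (a i0 t / a i0 s) * (q * (a i0 s / a i0 t)) = q * q := by
      field_simp
    rw [e1, e2] at H
    nlinarith
  -- transitivity
  have htrans : ∀ s t u : Fin d, R s t → R u s → R u t := by
    rintro s t u ⟨hb, hb'⟩ ⟨hc, hc'⟩
    have key : ∀ j : Fin n, a j t / a j u = (a j t / a j s) * (a j s / a j u) := by
      intro j
      have h1 := hpos j s
      have h2 := hpos j u
      field_simp
    constructor
    · intro i
      have := mul_pos (hb i) (hc i)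
      simpa [key i] using this
    · intro i h
      have h1 := hb' i h
      have h2 := hc' i h
      have p1 := hb i
      have p2 := hc i
      simp only at h1 h2 p1 p2 ⊢
      rw [key ⟨(i : ℕ) + 1, h⟩, key i]
      nlinarith [mul_lt_mul'' h1 h2 (le_of_lt (mul_pos hq0 p1)) (le_of_lt (mul_pos hq0 p2)),
        mul_pos p1 p2, mul_pos hq0 (mul_pos p1 p2)]
  refine ⟨?_, ?_, ?_⟩
  · intro s t hst
    rcases hpg s t hst with h | h
    · exact Or.inl ⟨h, fun h' => hasymm s t h h'⟩
    · exact Or.inr ⟨h, fun h' => hasymm s t h' h⟩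
  · intro s t u h1 h2
    exact htrans s t u h1 h2
  · -- the unique sorting permutation
    haveI htri : IsTrichotomous (WrapFin d) (fun x y => R x.val y.val) := by
      constructor
      intro x y hn1 hn2
      by_cases hxy : x.val = y.val
      · exact WrapFin.ext hxy
      · rcases hpg x.val y.val hxy with h | h
        · exact absurd h hn1
        · exact absurd h hn2
    haveI hirr : IsIrrefl (WrapFin d) (fun x y => R x.val y.val) :=
      ⟨fun x h => hasymm x.val x.val h h⟩
    haveI htr : IsTrans (WrapFin d) (fun x y => R x.val y.val) :=
      ⟨fun x y z h1 h2 => htrans y.val z.val x.val h2 h1⟩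
    haveI hso : IsStrictOrder (WrapFin d) (fun x y => R x.val y.val) := { }
    have hsto : IsStrictTotalOrder (WrapFin d) (fun x y => R x.val y.val) := { }
    letI : IsStrictTotalOrder (WrapFin d) (fun x y => R x.val y.val) := hsto
    letI : DecidableRel (fun x y : WrapFin d => R x.val y.val) := Classical.decRel _
    letI lo : LinearOrder (WrapFin d) := linearOrderOfSTO (fun x y => R x.val y.val)
    have hlt : ∀ x y : WrapFin d, x < y ↔ R x.val y.val := fun x y => Iff.rfl
    have e : Fin d ≃o WrapFin d := Fintype.orderIsoFinOfCardEq (WrapFin d) (wrapCard d)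
    refine ⟨(e.toEquiv.trans (wrapEquiv d)), ?_, ?_⟩
    · intro t h
      show R ((e ⟨t, Nat.lt_of_succ_lt h⟩).val) ((e ⟨t + 1, h⟩).val)
      rw [← hlt]
      exact e.strictMono (by simp [Fin.lt_def])
    · intro π' hπ'
      -- π' is strictly R-monotone
      have step : ∀ x : Fin d, ∀ h : (x : ℕ) + 1 < d, R (π' x) (π' ⟨(x : ℕ) + 1, h⟩) :=
        fun x h => hπ' x.val h
      have chain : ∀ k : ℕ, ∀ x y : Fin d, (y : ℕ) = (x : ℕ) + (k + 1) → R (π' x) (π' y) := by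
        intro k
        induction k with
        | zero =>
          intro x y hxy
          have h' : (x : ℕ) + 1 < d := by
            have := y.isLt; omega
          have : y = ⟨(x : ℕ) + 1, h'⟩ := Fin.ext (by simpa using hxy)
          rw [this]
          exact step x h'
        | succ k ih =>
          intro x y hxy
          have hz : (x : ℕ) + (k + 1) < d := by
            have := y.isLt; omega
          set z : Fin d := ⟨(x : ℕ) + (k + 1), hz⟩ with hzdef
          have h1 : R (π' x) (π' z) := ih x z rfl
          have hz1 : (z : ℕ) + 1 < d := by
            have := y.isLt; simp [hzdef]; omega
          have hy : y = ⟨(z : ℕ) + 1, hz1⟩ := Fin.ext (by simp [hzdef]; omega)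
          have h2 : R (π' z) (π' y) := by rw [hy]; exact step z hz1
          exact htrans (π' z) (π' y) (π' x) h2 h1
      have hmono : StrictMono (fun x : Fin d => (⟨π' x⟩ : WrapFin d)) := by
        intro x y hxy
        rw [hlt]
        exact chain ((y : ℕ) - (x : ℕ) - 1) x y (by
          have : (x : ℕ) < (y : ℕ) := hxy
          omega)
      have hmono2 : StrictMono (fun x : Fin d => e x) := fun x y hxy => e.strictMono hxy
      have hrange : Set.range (fun x : Fin d => (⟨π' x⟩ : WrapFin d)) =
          Set.range (fun x : Fin d => e x) := by
        have hs1 : Function.Surjective (fun x : Fin d => (⟨π' x⟩ : WrapFin d)) := by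
          intro w
          exact ⟨π'.symm w.val, by simp⟩
        have hs2 : Function.Surjective (fun x : Fin d => e x) := e.surjective
        rw [Set.range_eq_univ.2 hs1, Set.range_eq_univ.2 hs2]
      haveI : WellFoundedLT (Fin d) := Finite.to_wellFoundedLT
      have heq := (hmono.range_inj hmono2).1 hrange
      refine Equiv.ext fun x => ?_
      have h3 := congrArg WrapFin.val (congrFun heq x)
      exact h3
end

section
/- Let d ≥ 1, r ≥ 2, n = (r-1)(d+1)+1, and let p_1,...,p_n ∈ ℝ^d be in strong general position. Then: (i) for every proper partition A_1,...,A_r of {1,...,n} (i.e., 1 ≤ |A_m| ≤ d+1 for every m), the intersection ∩_{m=1}^r aff{p_i : i ∈ A_m} consists of exactly one point; (ii) for every partition A_1,...,A_r of {1,...,n} into nonempty parts that is not proper (i.e., some part has more than d+1 elements), the intersection ∩_{m=1}^r aff{p_i : i ∈ A_m} is empty. -/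
/-- Points `p 1, ..., p n` in `ℝ^d` are in strong general position if for every
collection of pairwise disjoint nonempty subsets `A 1, ..., A r` of the index set,
with `H m` the affine hull of `{p i : i ∈ A m}`, the intersection `⋂ m, H m` is
empty whenever the sum of the codimensions is at least `d+1`, and otherwise the
codimensions add up: `dim (⋂ m, H m) = d - Σ m, (d - dim (H m))`. -/
def StrongGenPos {d n : ℕ} (p : Fin n → Fin d → ℝ) : Prop :=
  ∀ (r : ℕ) (A : Fin r → Finset (Fin n)),
    (∀ m, (A m).Nonempty) →
    (∀ m m', m ≠ m' → Disjoint (A m) (A m')) →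
    (if d + 1 ≤ ∑ m, (d - Module.finrank ℝ
          (affineSpan ℝ (p '' ↑(A m)) : AffineSubspace ℝ (Fin d → ℝ)).direction) then
        (⨅ m, affineSpan ℝ (p '' ↑(A m)) : AffineSubspace ℝ (Fin d → ℝ)) = ⊥
      else
        (⨅ m, affineSpan ℝ (p '' ↑(A m)) : AffineSubspace ℝ (Fin d → ℝ)) ≠ ⊥ ∧
        Module.finrank ℝ
            (⨅ m, affineSpan ℝ (p '' ↑(A m)) : AffineSubspace ℝ (Fin d → ℝ)).direction
          = d - ∑ m, (d - Module.finrank ℝ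
              (affineSpan ℝ (p '' ↑(A m)) : AffineSubspace ℝ (Fin d → ℝ)).direction))

/-- Membership in an infimum of affine subspaces. -/
lemma mem_iInf_affine {ι : Type*} {k V P : Type*} [Ring k] [AddCommGroup V] [Module k V]
    [AddTorsor V P] (S : ι → AffineSubspace k P) (z : P) :
    z ∈ ⨅ i, S i ↔ ∀ i, z ∈ S i := by
  constructor
  · intro h i; exact (iInf_le S i) h
  · intro h
    rw [iInf]
    show z ∈ ⋂ s' ∈ Set.range S, (s' : Set P)
    exact Set.mem_iInter₂.2 (by rintro s ⟨i, rfl⟩; exact h i)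

/-- The affine span of the points indexed by a nonempty finite set `A` has dimension
at most `|A| - 1`. -/
lemma sgp_dim_le {d n : ℕ} (p : Fin n → Fin d → ℝ) (A : Finset (Fin n)) (hA : A.Nonempty) :
    Module.finrank ℝ (affineSpan ℝ (p '' ↑A) : AffineSubspace ℝ (Fin d → ℝ)).direction
      ≤ A.card - 1 := by
  classical
  rw [direction_affineSpan, ← Finset.coe_image]
  exact finrank_vectorSpan_image_finset_le ℝ p A (Nat.succ_pred_eq_of_pos hA.card_pos).symm

/-- In strong general position, a point is not in the affine hull of at most `d` other
points. -/
lemma sgp_not_mem_erase {d n : ℕ} (hd : 1 ≤ d) {p : Fin n → Fin d → ℝ} (hp : StrongGenPos p)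
    {A : Finset (Fin n)} (hA : A.card ≤ d + 1) {j : Fin n} (hj : j ∈ A) (h2 : 2 ≤ A.card) :
    p j ∉ affineSpan ℝ (p '' ↑(A.erase j)) := by
  classical
  intro hmem
  set F : Fin 2 → Finset (Fin n) := ![A.erase j, {j}] with hF
  have hne : ∀ m, (F m).Nonempty := by
    intro m
    fin_cases m
    · show (A.erase j).Nonempty
      rw [← Finset.card_pos, Finset.card_erase_of_mem hj]; omega
    · show ({j} : Finset (Fin n)).Nonempty
      simp
  have hdisj : ∀ m m', m ≠ m' → Disjoint (F m) (F m') := by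
    intro m m' hne'
    fin_cases m <;> fin_cases m' <;> simp_all [F, Finset.disjoint_singleton_right,
      Finset.disjoint_singleton_left]
  have h1 : Module.finrank ℝ
      (affineSpan ℝ (p '' ↑(F 1)) : AffineSubspace ℝ (Fin d → ℝ)).direction = 0 := by
    show Module.finrank ℝ (affineSpan ℝ (p '' ↑({j} : Finset (Fin n)))
      : AffineSubspace ℝ (Fin d → ℝ)).direction = 0
    rw [direction_affineSpan]
    simp [vectorSpan_singleton]
  have h0 : Module.finrank ℝ
      (affineSpan ℝ (p '' ↑(F 0)) : AffineSubspace ℝ (Fin d → ℝ)).direction ≤ d - 1 := by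
    have := sgp_dim_le p (A.erase j) (hne 0)
    rw [Finset.card_erase_of_mem hj] at this
    calc _ ≤ A.card - 1 - 1 := by exact this
    _ ≤ d - 1 := by omega
  have hsum : d + 1 ≤ ∑ m, (d - Module.finrank ℝ
      (affineSpan ℝ (p '' ↑(F m)) : AffineSubspace ℝ (Fin d → ℝ)).direction) := by
    rw [Fin.sum_univ_two, h1]
    omega
  have := hp 2 F hne hdisj
  rw [if_pos hsum] at this
  have hzmem : p j ∈ (⨅ m, affineSpan ℝ (p '' ↑(F m)) : AffineSubspace ℝ (Fin d → ℝ)) := by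
    rw [mem_iInf_affine]
    intro m
    fin_cases m
    · exact hmem
    · exact mem_affineSpan ℝ (by simp [F])
  rw [this] at hzmem
  exact AffineSubspace.notMem_bot ℝ (Fin d → ℝ) _ hzmem

/-- In strong general position, any at most `d + 1` of the points are affinely
independent. -/
lemma sgp_indep {d n : ℕ} (hd : 1 ≤ d) {p : Fin n → Fin d → ℝ} (hp : StrongGenPos p)
    {A : Finset (Fin n)} (hA : A.card ≤ d + 1) :
    AffineIndependent ℝ (fun i : A => p i.val) := by
  classical
  rw [affineIndependent_iff]
  intro s w hw0 hws
  by_contra hne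
  push_neg at hne
  obtain ⟨j, hjs, hwj⟩ := hne
  have hex : ∃ e ∈ s, e ≠ j := by
    by_contra h
    push_neg at h
    have hs : s = {j} := Finset.eq_singleton_iff_unique_mem.2 ⟨hjs, fun e he => h e he⟩
    rw [hs, Finset.sum_singleton] at hw0
    exact hwj hw0
  obtain ⟨e0, he0s, he0j⟩ := hex
  have h2 : 2 ≤ A.card := by
    rw [Nat.succ_le_iff, Finset.one_lt_card]
    exact ⟨j.val, j.prop, e0.val, e0.prop, fun h => he0j (Subtype.ext h.symm)⟩
  have hnot := sgp_not_mem_erase hd hp hA j.prop h2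
  apply hnot
  set B := A.erase (j : Fin n) with hB
  let lift : {x // x ∈ B} → {x // x ∈ A} := fun i => ⟨i.1, Finset.mem_of_mem_erase i.2⟩
  let q : {x // x ∈ B} → (Fin d → ℝ) := fun i => p i.1
  let v : {x // x ∈ B} → ℝ := fun i => if lift i ∈ s then -(w (lift i)) / (w j) else 0
  have hsum_erase : ∑ e ∈ s.erase j, w e = - w j := by
    have h := Finset.add_sum_erase s w hjs
    rw [hw0] at h
    linarith
  have hvec_erase : ∑ e ∈ s.erase j, w e • p e.1 = -(w j • p j.1) := by
    have h := Finset.add_sum_erase s (fun e => w e • p e.1) hjs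
    rw [hws] at h
    exact (neg_eq_of_add_eq_zero_left (by linear_combination (norm := module) h)).symm
  have htrans : ∀ {M : Type} [AddCommMonoid M] (f : {x // x ∈ A} → M),
      ∑ i ∈ Finset.univ.filter (fun i : {x // x ∈ B} => lift i ∈ s), f (lift i)
        = ∑ e ∈ s.erase j, f e := by
    intro M _ f
    refine Finset.sum_bij' (fun i _ => lift i)
      (fun e he => ⟨e.1, Finset.mem_erase.2
        ⟨fun h => (Finset.mem_erase.1 he).1 (Subtype.ext h), e.2⟩⟩) ?_ ?_ ?_ ?_ ?_
    · intro a ha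
      simp only [Finset.mem_filter, Finset.mem_univ, true_and] at ha
      refine Finset.mem_erase.2 ⟨?_, ha⟩
      intro h
      exact (Finset.mem_erase.1 a.2).1 (congrArg Subtype.val h)
    · intro a ha
      simp only [Finset.mem_filter, Finset.mem_univ, true_and]
      rw [show lift ⟨a.1, _⟩ = a from Subtype.ext rfl]
      exact (Finset.mem_erase.1 ha).2
    · intro a ha; exact Subtype.ext rfl
    · intro a ha; exact Subtype.ext rfl
    · intro a ha; rfl
  have hv1 : ∑ i : {x // x ∈ B}, v i = 1 := by
    have : ∑ i : {x // x ∈ B}, v i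
        = ∑ i ∈ Finset.univ.filter (fun i : {x // x ∈ B} => lift i ∈ s),
            (fun e : {x // x ∈ A} => -(w e) / (w j)) (lift i) := by
      rw [Finset.sum_filter]
    rw [this, htrans (fun e : {x // x ∈ A} => -(w e) / (w j)), ← Finset.sum_div,
      Finset.sum_neg_distrib, hsum_erase]
    field_simp
  have hvq : ∑ i : {x // x ∈ B}, v i • q i = p j.1 := by
    have : ∑ i : {x // x ∈ B}, v i • q i
        = ∑ i ∈ Finset.univ.filter (fun i : {x // x ∈ B} => lift i ∈ s),
            (fun e : {x // x ∈ A} => (-(w e) / (w j)) • p e.1) (lift i) := by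
      rw [Finset.sum_filter]
      congr 1
      ext i
      by_cases h : lift i ∈ s <;> simp [v, q, h, lift]
    rw [this, htrans (fun e : {x // x ∈ A} => (-(w e) / (w j)) • p e.1)]
    have : ∑ e ∈ s.erase j, (-(w e) / (w j)) • p e.1
        = (-(1:ℝ) / (w j)) • ∑ e ∈ s.erase j, w e • p e.1 := by
      rw [Finset.smul_sum]
      refine Finset.sum_congr rfl fun e _ => ?_
      rw [smul_smul]
      congr 1
      field_simp
    rw [this, hvec_erase, smul_neg, smul_smul]
    field_simp
    simp
  have hmem := affineCombination_mem_affineSpan (k := ℝ)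
    (s := (Finset.univ : Finset {x // x ∈ B})) (w := v) hv1 q
  rw [Finset.affineCombination_eq_linear_combination _ _ _ hv1, hvq] at hmem
  have hrange : Set.range q = p '' ↑B := by
    ext x
    constructor
    · rintro ⟨i, rfl⟩; exact ⟨i.1, i.2, rfl⟩
    · rintro ⟨y, hy, rfl⟩; exact ⟨⟨y, hy⟩, rfl⟩
  rwa [hrange] at hmem

/-- The exact dimension of the affine hull of at most `d + 1` points in strong
general position. -/
lemma sgp_dim_eq {d n : ℕ} (hd : 1 ≤ d) {p : Fin n → Fin d → ℝ} (hp : StrongGenPos p)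
    {A : Finset (Fin n)} (hA : A.card ≤ d + 1) (hne : A.Nonempty) :
    Module.finrank ℝ (affineSpan ℝ (p '' ↑A) : AffineSubspace ℝ (Fin d → ℝ)).direction
      = A.card - 1 := by
  have hind := sgp_indep hd hp hA
  have hcard : Fintype.card {x // x ∈ A} = (A.card - 1) + 1 := by
    rw [Fintype.card_coe]
    have := hne.card_pos
    omega
  have := hind.finrank_vectorSpan hcard
  rw [direction_affineSpan]
  have hrange : Set.range (fun i : A => p i.val) = p '' ↑A := by
    ext x
    constructor
    · rintro ⟨i, rfl⟩; exact ⟨i.1, i.2, rfl⟩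
    · rintro ⟨y, hy, rfl⟩; exact ⟨⟨y, hy⟩, rfl⟩
  rwa [hrange] at this

/-- The classes of a partition have cards summing to `n`. -/
lemma sgp_card_sum {n r : ℕ} {A : Fin r → Finset (Fin n)} (h : IsPartitionOf A) :
    ∑ m, (A m).card = n := by
  classical
  obtain ⟨hdisj, hcover⟩ := h
  have huniv : Finset.univ.biUnion A = Finset.univ := by
    ext i
    simp only [Finset.mem_biUnion, Finset.mem_univ, true_and, iff_true]
    exact hcover i
  have := Finset.card_biUnion (s := (Finset.univ : Finset (Fin r))) (t := A)
    (fun m _ m' _ hmm' => hdisj m m' hmm')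
  rw [huniv, Finset.card_univ, Fintype.card_fin] at this
  omega

/-- For `n = (r-1)(d+1)+1` points in strong general position in `ℝ^d`:
(i) for every proper partition (all classes of size between `1` and `d+1`) the
affine hulls of the classes intersect in exactly one point;
(ii) for every partition into nonempty classes that is not proper (some class has
more than `d+1` elements) the affine hulls of the classes have empty
intersection. -/
theorem affine_hulls_of_partition (d r : ℕ) (hd : 1 ≤ d) (hr : 2 ≤ r)
    (p : Fin ((r - 1) * (d + 1) + 1) → Fin d → ℝ) (hp : StrongGenPos p) :
    (∀ A : Fin r → Finset (Fin ((r - 1) * (d + 1) + 1)), IsPartitionOf A →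
      (∀ m, 1 ≤ (A m).card ∧ (A m).card ≤ d + 1) →
      ∃! z : Fin d → ℝ, ∀ m, z ∈ affineSpan ℝ (p '' ↑(A m))) ∧
    (∀ A : Fin r → Finset (Fin ((r - 1) * (d + 1) + 1)), IsPartitionOf A →
      (∀ m, (A m).Nonempty) → (∃ m, d + 1 < (A m).card) →
      ¬ ∃ z : Fin d → ℝ, ∀ m, z ∈ affineSpan ℝ (p '' ↑(A m))) := by
  classical
  have hrkey : r * (d + 1) = (r - 1) * (d + 1) + (d + 1) := by
    have h1 : r - 1 + 1 = r := by omega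
    calc r * (d + 1) = (r - 1 + 1) * (d + 1) := by rw [h1]
    _ = (r - 1) * (d + 1) + (d + 1) := by ring
  constructor
  · -- part (i)
    intro A hpart hcard
    have hne : ∀ m, (A m).Nonempty := fun m => Finset.card_pos.1 (hcard m).1
    have hcsum : ∑ m, (A m).card = (r - 1) * (d + 1) + 1 := sgp_card_sum hpart
    have hdim : ∀ m, Module.finrank ℝ
        (affineSpan ℝ (p '' ↑(A m)) : AffineSubspace ℝ (Fin d → ℝ)).direction
        = (A m).card - 1 := fun m => sgp_dim_eq hd hp (hcard m).2 (hne m)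
    have hS : ∑ m, (d - Module.finrank ℝ
        (affineSpan ℝ (p '' ↑(A m)) : AffineSubspace ℝ (Fin d → ℝ)).direction) = d := by
      have h1 : ∑ m, ((d - ((A m).card - 1)) + (A m).card) = r * (d + 1) := by
        rw [Finset.sum_congr rfl (fun m _ => show (d - ((A m).card - 1)) + (A m).card = d + 1 by
          have := (hcard m).1; have := (hcard m).2; omega)]
        simp [Finset.sum_const, Finset.card_univ, mul_comm]
      rw [Finset.sum_add_distrib, hcsum, hrkey] at h1
      have h2 : ∑ m, (d - Module.finrank ℝ
          (affineSpan ℝ (p '' ↑(A m)) : AffineSubspace ℝ (Fin d → ℝ)).direction)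
          = ∑ m, (d - ((A m).card - 1)) :=
        Finset.sum_congr rfl fun m _ => by rw [hdim m]
      rw [h2]
      omega
    have := hp r A hne hpart.1
    rw [if_neg (by rw [hS]; omega)] at this
    obtain ⟨hbot, hdim0⟩ := this
    have hdim0' : Module.finrank ℝ
        (⨅ m, affineSpan ℝ (p '' ↑(A m)) : AffineSubspace ℝ (Fin d → ℝ)).direction = 0 := by
      rw [hdim0, hS]; omega
    obtain ⟨z, hz⟩ := (AffineSubspace.nonempty_iff_ne_bot _).2 hbot
    refine ⟨z, fun m => (mem_iInf_affine _ z).1 hz m, ?_⟩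
    intro y hy
    have hyz : y ∈ (⨅ m, affineSpan ℝ (p '' ↑(A m)) : AffineSubspace ℝ (Fin d → ℝ)) :=
      (mem_iInf_affine _ y).2 hy
    have hdbot : (⨅ m, affineSpan ℝ (p '' ↑(A m))
        : AffineSubspace ℝ (Fin d → ℝ)).direction = ⊥ :=
      Submodule.finrank_eq_zero.1 hdim0'
    have hv : y -ᵥ z ∈ (⨅ m, affineSpan ℝ (p '' ↑(A m))
        : AffineSubspace ℝ (Fin d → ℝ)).direction :=
      AffineSubspace.vsub_mem_direction hyz hz
    rw [hdbot, Submodule.mem_bot, vsub_eq_zero_iff_eq] at hv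
    exact hv
  · -- part (ii)
    rintro A hpart hne ⟨M, hM⟩ ⟨z, hz⟩
    have hcsum : ∑ m, (A m).card = (r - 1) * (d + 1) + 1 := sgp_card_sum hpart
    have hbound : ∀ m, (d + 1) - (A m).card ≤ d - Module.finrank ℝ
        (affineSpan ℝ (p '' ↑(A m)) : AffineSubspace ℝ (Fin d → ℝ)).direction := by
      intro m
      have h1 := sgp_dim_le p (A m) (hne m)
      have h2 := (hne m).card_pos
      omega
    have hsum : d + 1 ≤ ∑ m, (d - Module.finrank ℝ
        (affineSpan ℝ (p '' ↑(A m)) : AffineSubspace ℝ (Fin d → ℝ)).direction) := by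
      have h1 : ∑ m, ((d + 1) - (A m).card) ≤ ∑ m, (d - Module.finrank ℝ
          (affineSpan ℝ (p '' ↑(A m)) : AffineSubspace ℝ (Fin d → ℝ)).direction) :=
        Finset.sum_le_sum fun m _ => hbound m
      have h2 : ∑ m ∈ Finset.univ.erase M, ((d + 1) - (A m).card)
          ≤ ∑ m, ((d + 1) - (A m).card) :=
        Finset.sum_le_sum_of_subset (Finset.erase_subset _ _)
      have h3 : ∑ m ∈ Finset.univ.erase M, (A m).card + (A M).card
          = (r - 1) * (d + 1) + 1 := by
        rw [Finset.sum_erase_add _ _ (Finset.mem_univ M)]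
        exact hcsum
      have h4 : ∑ m ∈ Finset.univ.erase M, ((d + 1) - (A m).card)
            + ∑ m ∈ Finset.univ.erase M, (A m).card
          ≥ (r - 1) * (d + 1) := by
        rw [← Finset.sum_add_distrib]
        calc (r - 1) * (d + 1)
            = ∑ _m ∈ Finset.univ.erase M, (d + 1) := by
              rw [Finset.sum_const, Finset.card_erase_of_mem (Finset.mem_univ M),
                Finset.card_univ, Fintype.card_fin, smul_eq_mul]
          _ ≤ _ := Finset.sum_le_sum fun m _ => by omega
      omega
    have := hp r A hne hpart.1
    rw [if_pos hsum] at this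
    have hzmem : z ∈ (⨅ m, affineSpan ℝ (p '' ↑(A m)) : AffineSubspace ℝ (Fin d → ℝ)) :=
      (mem_iInf_affine _ z).2 hz
    rw [this] at hzmem
    exact AffineSubspace.notMem_bot ℝ (Fin d → ℝ) z hzmem
end
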